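/- Let G be a balanced bipartite graph with parts V1, V2 each of size m+n-1 (m > n ≥ 1) and δ(G) > (3/4)(m+n-1). Suppose a red-blue edge-coloring of G has no red connected matching of size m. Then the blue subgraph has a connected component containing at least n vertices of V1 and at least n vertices of V2. -/

import Mathlib

open SimpleGraph Set

section Aux
open Finset

set_option linter.unusedSectionVars false
set_option maxHeartbeats 1600000
attribute [local instance 10] Classical.propDecidable

variable {V : Type*} [Fintype V] [DecidableEq V]

/-- The part of a finset `S` lying in the connected component `c` of `H`. -/
noncomputable def bpart (H : SimpleGraph V) (S : Finset V) (c : H.ConnectedComponent) :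
    Finset V :=
  S.filter (fun x => H.connectedComponentMk x = c)

lemma mem_bpart {H : SimpleGraph V} {S : Finset V} {c : H.ConnectedComponent} {x : V} :
    x ∈ bpart H S c ↔ x ∈ S ∧ H.connectedComponentMk x = c := by
  simp [bpart]

lemma bpart_subset {H : SimpleGraph V} {S : Finset V} {c : H.ConnectedComponent} :
    bpart H S c ⊆ S := Finset.filter_subset _ _

lemma bpart_disjoint {H : SimpleGraph V} {S : Finset V} {c c' : H.ConnectedComponent}
    (h : c ≠ c') : Disjoint (bpart H S c) (bpart H S c') := by
  rw [Finset.disjoint_left]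
  intro x hx hx'
  rw [mem_bpart] at hx hx'
  exact h (hx.2 ▸ hx'.2 ▸ rfl)

lemma bpart_pair_card {H : SimpleGraph V} {S : Finset V} {c c' : H.ConnectedComponent}
    (h : c ≠ c') : (bpart H S c).card + (bpart H S c').card ≤ S.card := by
  rw [← Finset.card_union_of_disjoint (bpart_disjoint h)]
  exact Finset.card_le_card (Finset.union_subset bpart_subset bpart_subset)

lemma bpart_triple_card {H : SimpleGraph V} {S : Finset V} {c c' c'' : H.ConnectedComponent}
    (h : c ≠ c') (h' : c ≠ c'') (h'' : c' ≠ c'') :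
    (bpart H S c).card + (bpart H S c').card + (bpart H S c'').card ≤ S.card := by
  have hd : Disjoint (bpart H S c ∪ bpart H S c') (bpart H S c'') := by
    rw [Finset.disjoint_union_left]
    exact ⟨bpart_disjoint h', bpart_disjoint h''⟩
  calc (bpart H S c).card + (bpart H S c').card + (bpart H S c'').card
      = (bpart H S c ∪ bpart H S c').card + (bpart H S c'').card := by
        rw [Finset.card_union_of_disjoint (bpart_disjoint h)]
    _ = (bpart H S c ∪ bpart H S c' ∪ bpart H S c'').card := by
        rw [Finset.card_union_of_disjoint hd]
    _ ≤ S.card := Finset.card_le_card (by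
        refine Finset.union_subset (Finset.union_subset bpart_subset bpart_subset) bpart_subset)

lemma mem_bpart_self {H : SimpleGraph V} {S : Finset V} {x : V} (hx : x ∈ S) :
    x ∈ bpart H S (H.connectedComponentMk x) := mem_bpart.2 ⟨hx, rfl⟩
section Tools

variable {N t m : ℕ} {G R B : SimpleGraph V} {W1 W2 : Finset V}

/-- neighbors of a `W1`-vertex lie in `W2`. -/
lemma nbr_subset (hside : ∀ u w, u ∈ W1 → G.Adj u w → w ∈ W2) {u : V} (hu : u ∈ W1) :
    G.neighborFinset u ⊆ W2 := by
  intro w hw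
  exact hside u w hu ((SimpleGraph.mem_neighborFinset _ _ _).1 hw)

lemma deg_le (hside : ∀ u w, u ∈ W1 → G.Adj u w → w ∈ W2) (hW2 : W2.card = N)
    {u : V} (hu : u ∈ W1) : G.degree u ≤ N := by
  rw [← SimpleGraph.card_neighborFinset_eq_degree, ← hW2]
  exact Finset.card_le_card (nbr_subset hside hu)

lemma deg_split (hsplit : ∀ x y, G.Adj x y ↔ R.Adj x y ∨ B.Adj x y)
    (hRB : ∀ x y, R.Adj x y → B.Adj x y → False) (v : V) :
    G.degree v = R.degree v + B.degree v := by
  rw [← SimpleGraph.card_neighborFinset_eq_degree, ← SimpleGraph.card_neighborFinset_eq_degree,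
    ← SimpleGraph.card_neighborFinset_eq_degree]
  have hU : G.neighborFinset v = R.neighborFinset v ∪ B.neighborFinset v := by
    ext w
    simp only [SimpleGraph.mem_neighborFinset, Finset.mem_union]
    exact hsplit v w
  rw [hU, Finset.card_union_of_disjoint]
  rw [Finset.disjoint_left]
  intro w hw hw'
  exact hRB v w ((SimpleGraph.mem_neighborFinset _ _ _).1 hw)
    ((SimpleGraph.mem_neighborFinset _ _ _).1 hw')

/-- red neighbors of a `W1`-vertex lie in the `W2`-part of its red component. -/
lemma red_capture (hRG : R ≤ G) (hside : ∀ u w, u ∈ W1 → G.Adj u w → w ∈ W2)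
    {u : V} (hu : u ∈ W1) :
    R.neighborFinset u ⊆ bpart R W2 (R.connectedComponentMk u) := by
  intro w hw
  rw [SimpleGraph.mem_neighborFinset] at hw
  exact mem_bpart.2 ⟨hside u w hu (hRG hw), (SimpleGraph.ConnectedComponent.connectedComponentMk_eq_of_adj hw).symm⟩

lemma blue_capture (hBG : B ≤ G) (hside : ∀ u w, u ∈ W1 → G.Adj u w → w ∈ W2)
    {u : V} (hu : u ∈ W1) :
    B.neighborFinset u ⊆ bpart B W2 (B.connectedComponentMk u) := by
  intro w hw
  rw [SimpleGraph.mem_neighborFinset] at hw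
  exact mem_bpart.2 ⟨hside u w hu (hBG hw), (SimpleGraph.ConnectedComponent.connectedComponentMk_eq_of_adj hw).symm⟩

theorem E1 (hdeg : ∀ v, 3*N < 4*G.degree v) (hRG : R ≤ G) (hBG : B ≤ G)
    (hsplit : ∀ x y, G.Adj x y ↔ R.Adj x y ∨ B.Adj x y)
    (hRB : ∀ x y, R.Adj x y → B.Adj x y → False)
    (hside : ∀ u w, u ∈ W1 → G.Adj u w → w ∈ W2)
    {u : V} (hu : u ∈ W1) :
    3*N < 4 * (bpart R W2 (R.connectedComponentMk u)).card
        + 4 * (bpart B W2 (B.connectedComponentMk u)).card := by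
  have h1 : R.degree u ≤ (bpart R W2 (R.connectedComponentMk u)).card := by
    rw [← SimpleGraph.card_neighborFinset_eq_degree]
    exact Finset.card_le_card (red_capture hRG hside hu)
  have h2 : B.degree u ≤ (bpart B W2 (B.connectedComponentMk u)).card := by
    rw [← SimpleGraph.card_neighborFinset_eq_degree]
    exact Finset.card_le_card (blue_capture hBG hside hu)
  have h3 := hdeg u
  rw [deg_split hsplit hRB u] at h3
  omega

theorem E1deg (hdeg : ∀ v, 3*N < 4*G.degree v) (hBG : B ≤ G)
    (hsplit : ∀ x y, G.Adj x y ↔ R.Adj x y ∨ B.Adj x y)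
    (hRB : ∀ x y, R.Adj x y → B.Adj x y → False)
    (hside : ∀ u w, u ∈ W1 → G.Adj u w → w ∈ W2)
    {u : V} (hu : u ∈ W1) :
    3*N < 4 * R.degree u + 4 * (bpart B W2 (B.connectedComponentMk u)).card := by
  have h2 : B.degree u ≤ (bpart B W2 (B.connectedComponentMk u)).card := by
    rw [← SimpleGraph.card_neighborFinset_eq_degree]
    exact Finset.card_le_card (blue_capture hBG hside hu)
  have h3 := hdeg u
  rw [deg_split hsplit hRB u] at h3
  omega

theorem X1 (hdeg : ∀ v, 3*N < 4*G.degree v) (hW2 : W2.card = N)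
    (hsplit : ∀ x y, G.Adj x y ↔ R.Adj x y ∨ B.Adj x y)
    (hside : ∀ u w, u ∈ W1 → G.Adj u w → w ∈ W2)
    {u : V} (hu : u ∈ W1) {d : R.ConnectedComponent} (hd : R.connectedComponentMk u ≠ d) :
    4 * (bpart R W2 d).card <
      N + 4 * ((bpart R W2 d) ∩ (bpart B W2 (B.connectedComponentMk u))).card := by
  set S := bpart R W2 d
  set C := bpart B W2 (B.connectedComponentMk u)
  have hsub : S \ C ⊆ W2 \ G.neighborFinset u := by
    intro w hw
    rw [Finset.mem_sdiff] at hw ⊢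
    obtain ⟨hwS, hwC⟩ := hw
    have hwW2 : w ∈ W2 := bpart_subset hwS
    refine ⟨hwW2, ?_⟩
    intro hadj
    rw [SimpleGraph.mem_neighborFinset] at hadj
    rcases (hsplit u w).1 hadj with hr | hb
    · exact hd (((SimpleGraph.ConnectedComponent.connectedComponentMk_eq_of_adj hr)).trans
        ((mem_bpart.1 hwS).2))
    · exact hwC (mem_bpart.2 ⟨hwW2, (SimpleGraph.ConnectedComponent.connectedComponentMk_eq_of_adj hb).symm⟩)
  have h1 : (S \ C).card ≤ N - G.degree u := by
    have := Finset.card_le_card hsub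
    rwa [Finset.card_sdiff_of_subset (nbr_subset hside hu), hW2,
      SimpleGraph.card_neighborFinset_eq_degree] at this
  have h2 : (S \ C).card + (S ∩ C).card = S.card := Finset.card_sdiff_add_card_inter _ _
  have h3 := hdeg u
  have h4 := deg_le hside hW2 hu
  omega

/-- two `W1`-vertices in the same blue component whose blue `W2`-part is not huge
are in the same red component. -/
theorem ATsame (hdeg : ∀ v, 3*N < 4*G.degree v) (hW2 : W2.card = N)
    (hsplit : ∀ x y, G.Adj x y ↔ R.Adj x y ∨ B.Adj x y)
    (hside : ∀ u w, u ∈ W1 → G.Adj u w → w ∈ W2)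
    {u u' : V} (hu : u ∈ W1) (hu' : u' ∈ W1)
    (hL : B.connectedComponentMk u = B.connectedComponentMk u')
    (hb : 4 * (bpart B W2 (B.connectedComponentMk u)).card ≤ 2*N) :
    R.connectedComponentMk u = R.connectedComponentMk u' := by
  have hcard : N + (G.neighborFinset u ∩ G.neighborFinset u').card
      ≥ G.degree u + G.degree u' := by
    have h1 : (G.neighborFinset u ∪ G.neighborFinset u').card ≤ N := by
      rw [← hW2]
      exact Finset.card_le_card
        (Finset.union_subset (nbr_subset hside hu) (nbr_subset hside hu'))
    have h2 := Finset.card_inter_add_card_union (G.neighborFinset u) (G.neighborFinset u')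
    rw [SimpleGraph.card_neighborFinset_eq_degree, SimpleGraph.card_neighborFinset_eq_degree] at h2
    omega
  have hex : ¬ ((G.neighborFinset u ∩ G.neighborFinset u')
      ⊆ bpart B W2 (B.connectedComponentMk u)) := by
    intro hsub
    have := Finset.card_le_card hsub
    have h3 := hdeg u; have h4 := hdeg u'
    omega
  obtain ⟨w, hwW, hwC⟩ := Finset.not_subset.1 hex
  rw [Finset.mem_inter, SimpleGraph.mem_neighborFinset, SimpleGraph.mem_neighborFinset]
    at hwW
  have hw2 : w ∈ W2 := hside u w hu hwW.1
  have hr1 : R.Adj u w := by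
    rcases (hsplit u w).1 hwW.1 with hr | hb'
    · exact hr
    · exact absurd (mem_bpart.2 ⟨hw2, (SimpleGraph.ConnectedComponent.connectedComponentMk_eq_of_adj hb').symm⟩) hwC
  have hr2 : R.Adj u' w := by
    rcases (hsplit u' w).1 hwW.2 with hr | hb'
    · exact hr
    · refine absurd (mem_bpart.2 ⟨hw2, ?_⟩) hwC
      exact ((SimpleGraph.ConnectedComponent.connectedComponentMk_eq_of_adj hb').symm).trans
        hL.symm
  calc R.connectedComponentMk u = R.connectedComponentMk w :=
        SimpleGraph.ConnectedComponent.connectedComponentMk_eq_of_adj hr1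
    _ = R.connectedComponentMk u' := (SimpleGraph.ConnectedComponent.connectedComponentMk_eq_of_adj hr2).symm

theorem ATcross (hdeg : ∀ v, 3*N < 4*G.degree v) (hW2 : W2.card = N)
    (hsplit : ∀ x y, G.Adj x y ↔ R.Adj x y ∨ B.Adj x y)
    (hside : ∀ u w, u ∈ W1 → G.Adj u w → w ∈ W2)
    {u u' : V} (hu : u ∈ W1) (hu' : u' ∈ W1)
    (hb : 4 * ((bpart B W2 (B.connectedComponentMk u)).card
        + (bpart B W2 (B.connectedComponentMk u')).card) ≤ 2*N) :
    R.connectedComponentMk u = R.connectedComponentMk u' := by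
  have hcard : N + (G.neighborFinset u ∩ G.neighborFinset u').card
      ≥ G.degree u + G.degree u' := by
    have h1 : (G.neighborFinset u ∪ G.neighborFinset u').card ≤ N := by
      rw [← hW2]
      exact Finset.card_le_card
        (Finset.union_subset (nbr_subset hside hu) (nbr_subset hside hu'))
    have h2 := Finset.card_inter_add_card_union (G.neighborFinset u) (G.neighborFinset u')
    rw [SimpleGraph.card_neighborFinset_eq_degree, SimpleGraph.card_neighborFinset_eq_degree] at h2
    omega
  have hex : ¬ ((G.neighborFinset u ∩ G.neighborFinset u')
      ⊆ bpart B W2 (B.connectedComponentMk u)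
      ∪ bpart B W2 (B.connectedComponentMk u')) := by
    intro hsub
    have := Finset.card_le_card hsub
    have hle := Finset.card_union_le (bpart B W2 (B.connectedComponentMk u))
      (bpart B W2 (B.connectedComponentMk u'))
    have h3 := hdeg u; have h4 := hdeg u'
    omega
  obtain ⟨w, hwW, hwC⟩ := Finset.not_subset.1 hex
  rw [Finset.mem_union] at hwC
  push_neg at hwC
  rw [Finset.mem_inter, SimpleGraph.mem_neighborFinset, SimpleGraph.mem_neighborFinset]
    at hwW
  have hw2 : w ∈ W2 := hside u w hu hwW.1
  have hr1 : R.Adj u w := by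
    rcases (hsplit u w).1 hwW.1 with hr | hb'
    · exact hr
    · exact absurd (mem_bpart.2 ⟨hw2, (SimpleGraph.ConnectedComponent.connectedComponentMk_eq_of_adj hb').symm⟩)
        hwC.1
  have hr2 : R.Adj u' w := by
    rcases (hsplit u' w).1 hwW.2 with hr | hb'
    · exact hr
    · exact absurd (mem_bpart.2 ⟨hw2, (SimpleGraph.ConnectedComponent.connectedComponentMk_eq_of_adj hb').symm⟩)
        hwC.2
  calc R.connectedComponentMk u = R.connectedComponentMk w :=
        SimpleGraph.ConnectedComponent.connectedComponentMk_eq_of_adj hr1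
    _ = R.connectedComponentMk u' := (SimpleGraph.ConnectedComponent.connectedComponentMk_eq_of_adj hr2).symm

/-- every `W1`-vertex whose own blue `W2`-part is not huge has a red neighbor in `W2`
outside its own blue component. -/
theorem LINK (hdeg : ∀ v, 3*N < 4*G.degree v)
    (hsplit : ∀ x y, G.Adj x y ↔ R.Adj x y ∨ B.Adj x y)
    (hside : ∀ u w, u ∈ W1 → G.Adj u w → w ∈ W2)
    {u : V} (hu : u ∈ W1)
    (hb : 4 * (bpart B W2 (B.connectedComponentMk u)).card ≤ 2*N) :
    ∃ w ∈ W2, R.Adj u w ∧ B.connectedComponentMk w ≠ B.connectedComponentMk u := by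
  have hex : ¬ (G.neighborFinset u ⊆ bpart B W2 (B.connectedComponentMk u)) := by
    intro hsub
    have := Finset.card_le_card hsub
    rw [SimpleGraph.card_neighborFinset_eq_degree] at this
    have h3 := hdeg u
    omega
  obtain ⟨w, hwW, hwC⟩ := Finset.not_subset.1 hex
  rw [SimpleGraph.mem_neighborFinset] at hwW
  have hw2 : w ∈ W2 := hside u w hu hwW
  have hr : R.Adj u w := by
    rcases (hsplit u w).1 hwW with hr | hb'
    · exact hr
    · exact absurd (mem_bpart.2 ⟨hw2, (SimpleGraph.ConnectedComponent.connectedComponentMk_eq_of_adj hb').symm⟩) hwC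
  refine ⟨w, hw2, hr, ?_⟩
  intro hLw
  exact hwC (mem_bpart.2 ⟨hw2, hLw⟩)

/-- uniqueness of a blue component with huge `W2`-part. -/
theorem Csing {c c' : B.ConnectedComponent} (hW2 : W2.card = N)
    (h : 2*N < 4 * (bpart B W2 c).card) (h' : 2*N < 4 * (bpart B W2 c').card) : c = c' := by
  by_contra hne
  have := bpart_pair_card (H := B) (S := W2) hne
  omega

end Tools
section Tools2

variable {N t m : ℕ} {G R B : SimpleGraph V} {W1 W2 : Finset V}

/-- pair sum inequality: two `W1`-vertices in different red components have blue
components whose `W2`-parts together are large. -/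
theorem PSUM (hdeg : ∀ v, 3*N < 4*G.degree v) (hW2 : W2.card = N)
    (hRG : R ≤ G) (hBG : B ≤ G)
    (hsplit : ∀ x y, G.Adj x y ↔ R.Adj x y ∨ B.Adj x y)
    (hRB : ∀ x y, R.Adj x y → B.Adj x y → False)
    (hside : ∀ u w, u ∈ W1 → G.Adj u w → w ∈ W2)
    {u u' : V} (hu : u ∈ W1) (hu' : u' ∈ W1)
    (hne : R.connectedComponentMk u ≠ R.connectedComponentMk u') :
    2*N < 4 * ((bpart B W2 (B.connectedComponentMk u)).card
      + (bpart B W2 (B.connectedComponentMk u')).card) := by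
  have h1 := E1 hdeg hRG hBG hsplit hRB hside hu'
  have h2 := X1 hdeg hW2 hsplit hside hu hne
  have h3 : ((bpart R W2 (R.connectedComponentMk u')) ∩
      (bpart B W2 (B.connectedComponentMk u))).card
      ≤ (bpart B W2 (B.connectedComponentMk u)).card :=
    Finset.card_le_card (Finset.inter_subset_right)
  omega

/-- placement: if `u, u'` are in different red components then the `W2`-part of `u`'s blue
component meets the red component of `u'` (provided `u'`'s blue `W2`-part is not huge). -/
theorem PLACE (hdeg : ∀ v, 3*N < 4*G.degree v) (hW2 : W2.card = N)
    (hRG : R ≤ G) (hBG : B ≤ G)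
    (hsplit : ∀ x y, G.Adj x y ↔ R.Adj x y ∨ B.Adj x y)
    (hRB : ∀ x y, R.Adj x y → B.Adj x y → False)
    (hside : ∀ u w, u ∈ W1 → G.Adj u w → w ∈ W2)
    {u u' : V} (hu : u ∈ W1) (hu' : u' ∈ W1)
    (hne : R.connectedComponentMk u ≠ R.connectedComponentMk u')
    (hb' : 4 * (bpart B W2 (B.connectedComponentMk u')).card ≤ 2*N) :
    ∃ w, w ∈ bpart R W2 (R.connectedComponentMk u')
      ∧ w ∈ bpart B W2 (B.connectedComponentMk u) := by
  have h1 := E1 hdeg hRG hBG hsplit hRB hside hu'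
  have h2 := X1 hdeg hW2 hsplit hside hu hne
  have h3 : 0 < ((bpart R W2 (R.connectedComponentMk u')) ∩
      (bpart B W2 (B.connectedComponentMk u))).card := by omega
  obtain ⟨w, hw⟩ := Finset.card_pos.1 h3
  rw [Finset.mem_inter] at hw
  exact ⟨w, hw.1, hw.2⟩

/-- the filtered set of vertices whose blue component satisfies a predicate equals the
union of parts over components satisfying the predicate. -/
lemma filter_eq_biUnion (S : Finset V) (Q : B.ConnectedComponent → Prop)
    [DecidablePred Q] [DecidablePred (fun u => Q (B.connectedComponentMk u))] :
    S.filter (fun u => Q (B.connectedComponentMk u))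
      = (Finset.univ.filter Q).biUnion (fun c => bpart B S c) := by
  ext x
  simp only [Finset.mem_filter, Finset.mem_biUnion, Finset.mem_univ, true_and, mem_bpart]
  constructor
  · rintro ⟨hx, hq⟩
    exact ⟨B.connectedComponentMk x, hq, hx, rfl⟩
  · rintro ⟨c, hq, hx, hc⟩
    exact ⟨hx, hc ▸ hq⟩

lemma filter_card_sum (S : Finset V) (Q : B.ConnectedComponent → Prop)
    [DecidablePred Q] [DecidablePred (fun u => Q (B.connectedComponentMk u))] :
    (S.filter (fun u => Q (B.connectedComponentMk u))).card
      = ∑ c ∈ Finset.univ.filter Q, (bpart B S c).card := by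
  rw [filter_eq_biUnion]
  exact Finset.card_biUnion (fun c _ c' _ h => bpart_disjoint h)

/-- the global count: vertices in "thin" blue blocks on the two sides together
number at least `N`. -/
theorem LCOUNT (hW1 : W1.card = N) (hW2 : W2.card = N)
    (hstar : ∀ c : B.ConnectedComponent,
      (bpart B W1 c).card ≤ t ∨ (bpart B W2 c).card ≤ t) :
    N ≤ (W1.filter (fun u => (bpart B W2 (B.connectedComponentMk u)).card ≤ t)).card
      + (W2.filter (fun w => (bpart B W1 (B.connectedComponentMk w)).card ≤ t)).card := by
  set S1 := W1.filter (fun u => (bpart B W2 (B.connectedComponentMk u)).card ≤ t) with hS1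
  set S2 := W2.filter (fun w => (bpart B W1 (B.connectedComponentMk w)).card ≤ t) with hS2
  set F := Finset.univ.filter
    (fun c : B.ConnectedComponent => ¬ (bpart B W2 c).card ≤ t) with hF
  have hbadcard : (W1.filter
      (fun u => ¬ (bpart B W2 (B.connectedComponentMk u)).card ≤ t)).card
      = ∑ c ∈ F, (bpart B W1 c).card := by
    rw [hF]; exact filter_card_sum W1 (fun c => ¬ (bpart B W2 c).card ≤ t)
  have hsplitS1 : S1.card + (W1.filter
      (fun u => ¬ (bpart B W2 (B.connectedComponentMk u)).card ≤ t)).card = N := by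
    rw [hS1, Finset.card_filter_add_card_filter_not, hW1]
  have hb1 : ∑ c ∈ F, (bpart B W1 c).card ≤ t * F.card := by
    rw [mul_comm]
    apply Finset.sum_le_card_nsmul
    intro c hc
    rw [hF, Finset.mem_filter] at hc
    rcases hstar c with h | h
    · exact h
    · exact absurd h hc.2
  have hb2 : (t+1) * F.card ≤ ∑ c ∈ F, (bpart B W2 c).card := by
    have := Finset.card_nsmul_le_sum F (fun c => (bpart B W2 c).card) (t+1)
      (fun c hc => by
        rw [hF, Finset.mem_filter] at hc
        show t + 1 ≤ (bpart B W2 c).card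
        omega)
    rw [smul_eq_mul, mul_comm] at this
    exact this
  have hb3 : ∑ c ∈ F, (bpart B W2 c).card ≤ S2.card := by
    have hFsub : F ⊆ Finset.univ.filter
        (fun c : B.ConnectedComponent => (bpart B W1 c).card ≤ t) := by
      intro c hc
      rw [hF, Finset.mem_filter] at hc
      rw [Finset.mem_filter]
      refine ⟨Finset.mem_univ _, ?_⟩
      rcases hstar c with h | h
      · exact h
      · exact absurd h hc.2
    calc ∑ c ∈ F, (bpart B W2 c).card
        ≤ ∑ c ∈ Finset.univ.filter
            (fun c : B.ConnectedComponent => (bpart B W1 c).card ≤ t),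
            (bpart B W2 c).card :=
          Finset.sum_le_sum_of_subset hFsub
      _ = S2.card := (filter_card_sum W2 _).symm
  -- now conclude
  have hbadeq : N - S1.card = ∑ c ∈ F, (bpart B W1 c).card := by omega
  have e1 : (t+1) * (N - S1.card) ≤ t * S2.card := by
    rw [hbadeq]
    calc (t+1) * (∑ c ∈ F, (bpart B W1 c).card) ≤ (t+1) * (t * F.card) :=
          Nat.mul_le_mul_left _ hb1
      _ = t * ((t+1) * F.card) := by ring
      _ ≤ t * S2.card := Nat.mul_le_mul_left _ (le_trans hb2 hb3)
  have hfin : (t+1) * N ≤ (t+1) * (S1.card + S2.card) := by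
    have hsum : N = S1.card + (N - S1.card) := by omega
    calc (t+1) * N = (t+1) * S1.card + (t+1) * (N - S1.card) := by
          rw [← Nat.mul_add, ← hsum]
      _ ≤ (t+1) * S1.card + t * S2.card := by omega
      _ ≤ (t+1) * S1.card + (t+1) * S2.card := by
          have : t * S2.card ≤ (t+1) * S2.card := Nat.mul_le_mul_right _ (by omega)
          omega
      _ = (t+1) * (S1.card + S2.card) := by ring
  exact Nat.le_of_mul_le_mul_left hfin (by omega)

end Tools2
section Engines

variable {N t m : ℕ} {G R B : SimpleGraph V} {W1 W2 : Finset V}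

lemma card_filter_ne (S : Finset V) (c : B.ConnectedComponent) :
    (S.filter (fun x => B.connectedComponentMk x ≠ c)).card = S.card - (bpart B S c).card := by
  have : S.filter (fun x => B.connectedComponentMk x ≠ c) = S \ bpart B S c := by
    ext x
    simp only [Finset.mem_filter, Finset.mem_sdiff, mem_bpart]
    tauto
  rw [this, Finset.card_sdiff_of_subset bpart_subset]

lemma sum_bpart_le (S : Finset V) (F : Finset B.ConnectedComponent) :
    ∑ c ∈ F, (bpart B S c).card ≤ S.card := by
  rw [← Finset.card_biUnion (fun c _ c' _ h => bpart_disjoint h)]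
  exact Finset.card_le_card (Finset.biUnion_subset.2 (fun c _ => bpart_subset))

/-- some `W1`-vertex lies in a blue block with thin `W2`-part. -/
lemma THINEX (hW1 : W1.card = N) (hW2 : W2.card = N) (hN : 2 ≤ N)
    (hstar : ∀ c : B.ConnectedComponent,
      (bpart B W1 c).card ≤ t ∨ (bpart B W2 c).card ≤ t) :
    ∃ u ∈ W1, (bpart B W2 (B.connectedComponentMk u)).card ≤ t := by
  by_contra hno
  push_neg at hno
  have hfull : W1.filter
      (fun u => ¬ (bpart B W2 (B.connectedComponentMk u)).card ≤ t) = W1 := by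
    apply Finset.filter_true_of_mem
    intro u hu
    exact Nat.not_le.2 (hno u hu)
  have h1 : (W1.filter
      (fun u => ¬ (bpart B W2 (B.connectedComponentMk u)).card ≤ t)).card
      = ∑ c ∈ Finset.univ.filter
        (fun c : B.ConnectedComponent => ¬ (bpart B W2 c).card ≤ t), (bpart B W1 c).card :=
    filter_card_sum W1 (fun c => ¬ (bpart B W2 c).card ≤ t)
  set F := Finset.univ.filter
    (fun c : B.ConnectedComponent => ¬ (bpart B W2 c).card ≤ t) with hF
  have h2 : ∑ c ∈ F, (bpart B W1 c).card ≤ t * F.card := by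
    rw [mul_comm]
    have := Finset.sum_le_card_nsmul F (fun c => (bpart B W1 c).card) t
      (fun c hc => by
        rw [hF, Finset.mem_filter] at hc
        show (bpart B W1 c).card ≤ t
        rcases hstar c with h | h
        · exact h
        · exact absurd h hc.2)
    simpa using this
  have h3 : (t+1) * F.card ≤ ∑ c ∈ F, (bpart B W2 c).card := by
    have := Finset.card_nsmul_le_sum F (fun c => (bpart B W2 c).card) (t+1)
      (fun c hc => by
        rw [hF, Finset.mem_filter] at hc
        show t + 1 ≤ (bpart B W2 c).card
        omega)
    rw [smul_eq_mul, mul_comm] at this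
    exact this
  have h4 : ∑ c ∈ F, (bpart B W2 c).card ≤ N := hW2 ▸ sum_bpart_le W2 F
  rw [hfull, hW1] at h1
  -- N ≤ t * F.card and (t+1) * F.card ≤ N
  have h5 : N ≤ t * F.card := by omega
  have h6 : (t+1) * F.card ≤ N := by omega
  nlinarith
/-- if there is a blue block with huge `W2`-part, then all `W1`-vertices outside it
are in a single red component. -/
theorem TONE (hdeg : ∀ v, 3*N < 4*G.degree v) (hW2 : W2.card = N)
    (hRG : R ≤ G) (hBG : B ≤ G)
    (hsplit : ∀ x y, G.Adj x y ↔ R.Adj x y ∨ B.Adj x y)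
    (hRB : ∀ x y, R.Adj x y → B.Adj x y → False)
    (hside : ∀ u w, u ∈ W1 → G.Adj u w → w ∈ W2)
    {cstar : B.ConnectedComponent} (hc : 2*N < 4 * (bpart B W2 cstar).card)
    {u u' : V} (hu : u ∈ W1) (hu' : u' ∈ W1)
    (hLu : B.connectedComponentMk u ≠ cstar) (hLu' : B.connectedComponentMk u' ≠ cstar) :
    R.connectedComponentMk u = R.connectedComponentMk u' := by
  have hnb : ∀ x : V, x ∈ W1 → B.connectedComponentMk x ≠ cstar →
      4 * (bpart B W2 (B.connectedComponentMk x)).card ≤ 2*N := by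
    intro x _ hx
    by_contra hbig
    exact hx (Csing hW2 (by omega) hc)
  by_cases hL : B.connectedComponentMk u = B.connectedComponentMk u'
  · exact ATsame hdeg hW2 hsplit hside hu hu' hL (hnb u hu hLu)
  · by_contra hne
    have hps := PSUM hdeg hW2 hRG hBG hsplit hRB hside hu hu' hne
    have htriple := bpart_triple_card (H := B) (S := W2) hLu.symm
      (Ne.symm hLu') hL
    omega

end Engines
section Pools

variable {N t m : ℕ} {G R B : SimpleGraph V} {W1 W2 : Finset V}

/-- vertices of `Wa` in red component `d` whose blue block has a not-huge `Wb`-part. -/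
noncomputable def poolP (R B : SimpleGraph V) (Wa Wb : Finset V) (N : ℕ)
    (d : R.ConnectedComponent) : Finset V :=
  (bpart R Wa d).filter (fun u => 4 * (bpart B Wb (B.connectedComponentMk u)).card ≤ 2*N)

/-- vertices of `Wa` in red component `d` whose blue block has a thin `Wb`-part. -/
noncomputable def poolQ (R B : SimpleGraph V) (Wa Wb : Finset V) (t : ℕ)
    (d : R.ConnectedComponent) : Finset V :=
  (bpart R Wa d).filter (fun u => (bpart B Wb (B.connectedComponentMk u)).card ≤ t)

lemma mem_poolP {Wa Wb : Finset V} {d : R.ConnectedComponent} {u : V} :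
    u ∈ poolP R B Wa Wb N d ↔ u ∈ Wa ∧ R.connectedComponentMk u = d
      ∧ 4 * (bpart B Wb (B.connectedComponentMk u)).card ≤ 2*N := by
  simp [poolP, mem_bpart, Finset.mem_filter, and_assoc]

lemma mem_poolQ {Wa Wb : Finset V} {d : R.ConnectedComponent} {u : V} :
    u ∈ poolQ R B Wa Wb t d ↔ u ∈ Wa ∧ R.connectedComponentMk u = d
      ∧ (bpart B Wb (B.connectedComponentMk u)).card ≤ t := by
  simp [poolQ, mem_bpart, Finset.mem_filter, and_assoc]

theorem kappa1 (hW1 : W1.card = N) (hW2 : W2.card = N)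
    (hdeg : ∀ v, 3*N < 4*G.degree v) (hRG : R ≤ G) (hBG : B ≤ G)
    (hsplit : ∀ x y, G.Adj x y ↔ R.Adj x y ∨ B.Adj x y)
    (hRB : ∀ x y, R.Adj x y → B.Adj x y → False)
    (hside : ∀ u w, u ∈ W1 → G.Adj u w → w ∈ W2)
    (hside' : ∀ u w, u ∈ W2 → G.Adj u w → w ∈ W1)
    (hstar : ∀ c : B.ConnectedComponent,
      (bpart B W1 c).card ≤ t ∨ (bpart B W2 c).card ≤ t)
    (hNt : 2*t + 2 ≤ N) (hmt : m + t = N)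
    {cstar dstar : B.ConnectedComponent}
    (hc : 2*N < 4 * (bpart B W2 cstar).card) (hd : 2*N < 4 * (bpart B W1 dstar).card) :
    ∃ d : R.ConnectedComponent, m ≤ (poolP R B W1 W2 N d).card
      ∧ m ≤ (poolP R B W2 W1 N d).card
      ∧ m ≤ (poolQ R B W1 W2 t d).card + (poolQ R B W2 W1 t d).card := by
  have hacs : (bpart B W1 cstar).card ≤ t := by
    rcases hstar cstar with h | h
    · exact h
    · omega
  have hbds : (bpart B W2 dstar).card ≤ t := by
    rcases hstar dstar with h | h
    · omega
    · exact h
  have hcd : cstar ≠ dstar := by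
    rintro rfl
    omega
  have hT1 : ∀ u ∈ W1, ∀ u' ∈ W1, B.connectedComponentMk u ≠ cstar →
      B.connectedComponentMk u' ≠ cstar →
      R.connectedComponentMk u = R.connectedComponentMk u' :=
    fun u hu u' hu' h h' => TONE hdeg hW2 hRG hBG hsplit hRB hside hc hu hu' h h'
  have hT2 : ∀ w ∈ W2, ∀ w' ∈ W2, B.connectedComponentMk w ≠ dstar →
      B.connectedComponentMk w' ≠ dstar →
      R.connectedComponentMk w = R.connectedComponentMk w' :=
    fun w hw w' hw' h h' => TONE hdeg hW1 hRG hBG hsplit hRB hside' hd hw hw' h h'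
  obtain ⟨u0, hu0, hu0thin⟩ := THINEX hW1 hW2 (by omega) hstar
  have hu0c : B.connectedComponentMk u0 ≠ cstar := by
    intro h
    rw [h] at hu0thin
    omega
  have hw0ex : 0 < (W2.filter (fun w => B.connectedComponentMk w ≠ dstar)).card := by
    rw [card_filter_ne]
    omega
  obtain ⟨w0, hw0mem⟩ := Finset.card_pos.1 hw0ex
  rw [Finset.mem_filter] at hw0mem
  obtain ⟨hw0, hw0d⟩ := hw0mem
  have hlink : R.connectedComponentMk w0 = R.connectedComponentMk u0 := by
    by_contra hne
    have hredsub : R.neighborFinset u0 ⊆ bpart B W2 dstar := by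
      intro w hw
      rw [SimpleGraph.mem_neighborFinset] at hw
      have hw2 : w ∈ W2 := hside u0 w hu0 (hRG hw)
      by_contra hwn
      have hwd : B.connectedComponentMk w ≠ dstar := by
        intro h
        exact hwn (mem_bpart.2 ⟨hw2, h⟩)
      have h1 := hT2 w hw2 w0 hw0 hwd hw0d
      have h2 := SimpleGraph.ConnectedComponent.connectedComponentMk_eq_of_adj hw
      exact hne (h1 ▸ h2.symm)
    by_cases hud : B.connectedComponentMk u0 = dstar
    · have hsuball : G.neighborFinset u0 ⊆ bpart B W2 dstar := by
        intro w hw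
        rw [SimpleGraph.mem_neighborFinset] at hw
        rcases (hsplit u0 w).1 hw with hr | hb
        · exact hredsub ((SimpleGraph.mem_neighborFinset _ _ _).2 hr)
        · exact hud ▸ blue_capture hBG hside hu0 ((SimpleGraph.mem_neighborFinset _ _ _).2 hb)
      have h1 := Finset.card_le_card hsuball
      rw [SimpleGraph.card_neighborFinset_eq_degree] at h1
      have := hdeg u0
      omega
    · have h1 : R.degree u0 ≤ (bpart B W2 dstar).card := by
        rw [← SimpleGraph.card_neighborFinset_eq_degree]
        exact Finset.card_le_card hredsub
      have h2 := E1deg hdeg hBG hsplit hRB hside hu0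
      have h3 := bpart_triple_card (H := B) (S := W2) hcd (Ne.symm hu0c)
        (fun h => hud h.symm)
      omega
  refine ⟨R.connectedComponentMk u0, ?_, ?_, ?_⟩
  · have hsub : W1.filter (fun u => B.connectedComponentMk u ≠ cstar)
        ⊆ poolP R B W1 W2 N (R.connectedComponentMk u0) := by
      intro u hu
      rw [Finset.mem_filter] at hu
      refine mem_poolP.2 ⟨hu.1, hT1 u hu.1 u0 hu0 hu.2 hu0c, ?_⟩
      by_contra hbig
      exact hu.2 (Csing hW2 (by omega) hc)
    have h1 := Finset.card_le_card hsub
    rw [card_filter_ne, hW1] at h1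
    omega
  · have hsub : W2.filter (fun w => B.connectedComponentMk w ≠ dstar)
        ⊆ poolP R B W2 W1 N (R.connectedComponentMk u0) := by
      intro w hw
      rw [Finset.mem_filter] at hw
      refine mem_poolP.2 ⟨hw.1, (hT2 w hw.1 w0 hw0 hw.2 hw0d).trans hlink, ?_⟩
      by_contra hbig
      exact hw.2 (Csing hW1 (by omega) hd)
    have h1 := Finset.card_le_card hsub
    rw [card_filter_ne, hW2] at h1
    omega
  · have hsub1 : W1.filter
        (fun u => (bpart B W2 (B.connectedComponentMk u)).card ≤ t)
        ⊆ poolQ R B W1 W2 t (R.connectedComponentMk u0) := by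
      intro u hu
      rw [Finset.mem_filter] at hu
      have hne : B.connectedComponentMk u ≠ cstar := by
        intro h
        rw [h] at hu
        omega
      exact mem_poolQ.2 ⟨hu.1, hT1 u hu.1 u0 hu0 hne hu0c, hu.2⟩
    have hsub2 : W2.filter
        (fun w => (bpart B W1 (B.connectedComponentMk w)).card ≤ t)
        ⊆ poolQ R B W2 W1 t (R.connectedComponentMk u0) := by
      intro w hw
      rw [Finset.mem_filter] at hw
      have hne : B.connectedComponentMk w ≠ dstar := by
        intro h
        rw [h] at hw
        omega
      exact mem_poolQ.2 ⟨hw.1, (hT2 w hw.1 w0 hw0 hne hw0d).trans hlink, hw.2⟩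
    have h1 := Finset.card_le_card hsub1
    have h2 := Finset.card_le_card hsub2
    have h3 := LCOUNT hW1 hW2 hstar
    omega

end Pools
section Kappa2

variable {N t m : ℕ} {G R B : SimpleGraph V} {W1 W2 : Finset V}

theorem kappa2 (hW1 : W1.card = N) (hW2 : W2.card = N)
    (hdeg : ∀ v, 3*N < 4*G.degree v) (hRG : R ≤ G) (hBG : B ≤ G)
    (hsplit : ∀ x y, G.Adj x y ↔ R.Adj x y ∨ B.Adj x y)
    (hRB : ∀ x y, R.Adj x y → B.Adj x y → False)
    (hside : ∀ u w, u ∈ W1 → G.Adj u w → w ∈ W2)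
    (hside' : ∀ u w, u ∈ W2 → G.Adj u w → w ∈ W1)
    (hstar : ∀ c : B.ConnectedComponent,
      (bpart B W1 c).card ≤ t ∨ (bpart B W2 c).card ≤ t)
    (hNt : 2*t + 2 ≤ N) (hmt : m + t = N)
    {dstar : B.ConnectedComponent}
    (hd : 2*N < 4 * (bpart B W1 dstar).card)
    (hnoc : ∀ c : B.ConnectedComponent, 4 * (bpart B W2 c).card ≤ 2*N) :
    ∃ d : R.ConnectedComponent, m ≤ (poolP R B W1 W2 N d).card
      ∧ m ≤ (poolP R B W2 W1 N d).card
      ∧ m ≤ (poolQ R B W1 W2 t d).card + (poolQ R B W2 W1 t d).card := by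
  have hbds : (bpart B W2 dstar).card ≤ t := by
    rcases hstar dstar with h | h
    · omega
    · exact h
  have hT2 : ∀ w ∈ W2, ∀ w' ∈ W2, B.connectedComponentMk w ≠ dstar →
      B.connectedComponentMk w' ≠ dstar →
      R.connectedComponentMk w = R.connectedComponentMk w' :=
    fun w hw w' hw' h h' => TONE hdeg hW1 hRG hBG hsplit hRB hside' hd hw hw' h h'
  have hw0ex : 0 < (W2.filter (fun w => B.connectedComponentMk w ≠ dstar)).card := by
    rw [card_filter_ne]
    omega
  obtain ⟨w0, hw0mem⟩ := Finset.card_pos.1 hw0ex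
  rw [Finset.mem_filter] at hw0mem
  obtain ⟨hw0, hw0d⟩ := hw0mem
  have hstep3 : ∀ w ∈ W2, B.connectedComponentMk w ≠ dstar →
      R.connectedComponentMk w = R.connectedComponentMk w0 :=
    fun w hw h => hT2 w hw w0 hw0 h hw0d
  -- pool2 works in all cases:
  have hP2 : m ≤ (poolP R B W2 W1 N (R.connectedComponentMk w0)).card := by
    have hsub : W2.filter (fun w => B.connectedComponentMk w ≠ dstar)
        ⊆ poolP R B W2 W1 N (R.connectedComponentMk w0) := by
      intro w hw
      rw [Finset.mem_filter] at hw
      refine mem_poolP.2 ⟨hw.1, hstep3 w hw.1 hw.2, ?_⟩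
      by_contra hbig
      exact hw.2 (Csing hW1 (by omega) hd)
    have h1 := Finset.card_le_card hsub
    rw [card_filter_ne, hW2] at h1
    omega
  by_cases hall : ∀ u ∈ W1, R.connectedComponentMk u = R.connectedComponentMk w0
  · -- no rogue component
    refine ⟨R.connectedComponentMk w0, ?_, hP2, ?_⟩
    · have hsub : W1 ⊆ poolP R B W1 W2 N (R.connectedComponentMk w0) := by
        intro u hu
        exact mem_poolP.2 ⟨hu, hall u hu, hnoc _⟩
      have h1 := Finset.card_le_card hsub
      omega
    · have hsub1 : W1.filter
          (fun u => (bpart B W2 (B.connectedComponentMk u)).card ≤ t)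
          ⊆ poolQ R B W1 W2 t (R.connectedComponentMk w0) := by
        intro u hu
        rw [Finset.mem_filter] at hu
        exact mem_poolQ.2 ⟨hu.1, hall u hu.1, hu.2⟩
      have hsub2 : W2.filter
          (fun w => (bpart B W1 (B.connectedComponentMk w)).card ≤ t)
          ⊆ poolQ R B W2 W1 t (R.connectedComponentMk w0) := by
        intro w hw
        rw [Finset.mem_filter] at hw
        have hne : B.connectedComponentMk w ≠ dstar := by
          intro h
          rw [h] at hw
          omega
        exact mem_poolQ.2 ⟨hw.1, hstep3 w hw.1 hne, hw.2⟩
      have h1 := Finset.card_le_card hsub1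
      have h2 := Finset.card_le_card hsub2
      have h3 := LCOUNT hW1 hW2 hstar
      omega
  · -- rogue component exists
    push_neg at hall
    obtain ⟨u1, hu1, hne1⟩ := hall
    -- the rogue component's W2 part is inside the dstar block
    have hrog : ∀ u' ∈ W1, R.connectedComponentMk u' ≠ R.connectedComponentMk w0 →
        bpart R W2 (R.connectedComponentMk u') ⊆ bpart B W2 dstar := by
      intro u' _ hne' w hw
      rw [mem_bpart] at hw
      by_contra hwn
      have hwd : B.connectedComponentMk w ≠ dstar := fun h => hwn (mem_bpart.2 ⟨hw.1, h⟩)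
      exact hne' (hw.2 ▸ hstep3 w hw.1 hwd)
    -- rogue vertices are not in the dstar block
    have hrogX : ∀ u' ∈ W1, R.connectedComponentMk u' ≠ R.connectedComponentMk w0 →
        B.connectedComponentMk u' ≠ dstar := by
      intro u' hu' hne' hud
      have hsuball : G.neighborFinset u' ⊆ bpart B W2 dstar := by
        intro w hw
        rw [SimpleGraph.mem_neighborFinset] at hw
        rcases (hsplit u' w).1 hw with hr | hb
        · exact hrog u' hu' hne'
            (red_capture hRG hside hu' ((SimpleGraph.mem_neighborFinset _ _ _).2 hr))
        · exact hud ▸ blue_capture hBG hside hu' ((SimpleGraph.mem_neighborFinset _ _ _).2 hb)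
      have h1 := Finset.card_le_card hsuball
      rw [SimpleGraph.card_neighborFinset_eq_degree] at h1
      have := hdeg u'
      omega
    -- E1 bound for rogue vertices
    have hrogE : ∀ u' ∈ W1, R.connectedComponentMk u' ≠ R.connectedComponentMk w0 →
        3*N < 4 * (bpart B W2 dstar).card
          + 4 * (bpart B W2 (B.connectedComponentMk u')).card := by
      intro u' hu' hne'
      have h1 := E1 hdeg hRG hBG hsplit hRB hside hu'
      have h2 := Finset.card_le_card (hrog u' hu' hne')
      omega
    -- all rogue vertices share the block X := L u1
    have hXuni : ∀ u' ∈ W1, R.connectedComponentMk u' ≠ R.connectedComponentMk w0 →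
        B.connectedComponentMk u' = B.connectedComponentMk u1 := by
      intro u' hu' hne'
      by_contra hneX
      have h1 := hrogE u' hu' hne'
      have h2 := hrogE u1 hu1 hne1
      have h3 := bpart_triple_card (H := B) (S := W2) hneX
        (hrogX u' hu' hne') (hrogX u1 hu1 hne1)
      omega
    -- conversely all X-block vertices are rogue
    have hXrog : ∀ u' ∈ W1, B.connectedComponentMk u' = B.connectedComponentMk u1 →
        R.connectedComponentMk u' = R.connectedComponentMk u1 := by
      intro u' hu' hL
      exact ATsame hdeg hW2 hsplit hside hu' hu1 hL (by rw [hL]; exact hnoc _)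
    -- characterization of the main component's W1-part
    have hchar : bpart R W1 (R.connectedComponentMk w0)
        = W1.filter (fun u => B.connectedComponentMk u ≠ B.connectedComponentMk u1) := by
      ext u
      rw [mem_bpart, Finset.mem_filter]
      constructor
      · rintro ⟨huW, hK⟩
        refine ⟨huW, ?_⟩
        intro hL
        exact hne1 ((hXrog u huW hL).symm.trans hK)
      · rintro ⟨huW, hL⟩
        refine ⟨huW, ?_⟩
        by_contra hK
        exact hL (hXuni u huW hK)
    -- no third blocks on the W1 side
    have hthird : ∀ z : B.ConnectedComponent, z ≠ B.connectedComponentMk u1 → z ≠ dstar →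
        bpart B W1 z = ∅ := by
      intro z hzX hzd
      by_contra hzne
      obtain ⟨u4, hu4⟩ := Finset.nonempty_iff_ne_empty.2 hzne
      rw [mem_bpart] at hu4
      have hKu4 : R.connectedComponentMk u4 = R.connectedComponentMk w0 := by
        by_contra hK
        exact hzX ((hu4.2.symm).trans (hXuni u4 hu4.1 hK))
      have hKne : R.connectedComponentMk u4 ≠ R.connectedComponentMk u1 := by
        rw [hKu4]
        exact fun h => hne1 h.symm
      have hX1 := X1 hdeg hW2 hsplit hside hu4.1 hKne
      have hint : bpart R W2 (R.connectedComponentMk u1)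
          ∩ bpart B W2 (B.connectedComponentMk u4) = ∅ := by
        rw [hu4.2]
        apply Finset.eq_empty_of_forall_notMem
        intro w hw
        rw [Finset.mem_inter] at hw
        have h1 := hrog u1 hu1 hne1 hw.1
        exact Finset.disjoint_left.1 (bpart_disjoint hzd) hw.2 h1
      rw [hint, Finset.card_empty] at hX1
      have h2 := E1 hdeg hRG hBG hsplit hRB hside hu1
      have h3 := hnoc (B.connectedComponentMk u1)
      omega
    -- W1 is covered by blocks X and dstar
    have hcover1 : W1 = bpart B W1 (B.connectedComponentMk u1) ∪ bpart B W1 dstar := by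
      ext u
      rw [Finset.mem_union, mem_bpart, mem_bpart]
      constructor
      · intro hu
        by_cases hX : B.connectedComponentMk u = B.connectedComponentMk u1
        · exact Or.inl ⟨hu, hX⟩
        · by_cases hD : B.connectedComponentMk u = dstar
          · exact Or.inr ⟨hu, hD⟩
          · have hemp := hthird _ hX hD
            have := mem_bpart_self (H := B) hu
            rw [hemp] at this
            exact absurd this (Finset.notMem_empty u)
      · rintro (⟨hu, _⟩ | ⟨hu, _⟩)
        · exact hu
        · exact hu
    have hXd : B.connectedComponentMk u1 ≠ dstar := hrogX u1 hu1 hne1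
    have hcard1 : N = (bpart B W1 (B.connectedComponentMk u1)).card
        + (bpart B W1 dstar).card := by
      have hcu := Finset.card_union_of_disjoint (bpart_disjoint (H := B) (S := W1) hXd)
      rw [← hcover1] at hcu
      omega
    -- bound the size of the rogue block's W1 part
    have haCX : 4 * (bpart B W1 (B.connectedComponentMk u1)).card < N := by
      by_cases hw5 : ∃ w5 ∈ W2, B.connectedComponentMk w5 ≠ B.connectedComponentMk u1
          ∧ B.connectedComponentMk w5 ≠ dstar
      · obtain ⟨w5, hw5W, hw5X, hw5d⟩ := hw5
        have hKw5 : R.connectedComponentMk w5 = R.connectedComponentMk w0 :=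
          hstep3 w5 hw5W hw5d
        have hE2 := E1 hdeg hRG hBG hsplit hRB hside' hw5W
        rw [hKw5] at hE2
        have hzero : (bpart B W1 (B.connectedComponentMk w5)).card = 0 := by
          rw [hthird _ hw5X hw5d]
          exact Finset.card_empty
        rw [hzero] at hE2
        have hmain : (bpart R W1 (R.connectedComponentMk w0)).card
            = N - (bpart B W1 (B.connectedComponentMk u1)).card := by
          rw [hchar, card_filter_ne, hW1]
        omega
      · push_neg at hw5
        have hcov2 : W2 ⊆ bpart B W2 (B.connectedComponentMk u1) ∪ bpart B W2 dstar := by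
          intro w hw
          rw [Finset.mem_union, mem_bpart, mem_bpart]
          by_cases hX : B.connectedComponentMk w = B.connectedComponentMk u1
          · exact Or.inl ⟨hw, hX⟩
          · exact Or.inr ⟨hw, hw5 w hw hX⟩
        have h1 := Finset.card_le_card hcov2
        have h2 := Finset.card_union_le (bpart B W2 (B.connectedComponentMk u1))
          (bpart B W2 dstar)
        have h3 := hnoc (B.connectedComponentMk u1)
        rw [hW2] at h1
        omega
    have hmaincard : (bpart R W1 (R.connectedComponentMk w0)).card
        = N - (bpart B W1 (B.connectedComponentMk u1)).card := by
      rw [hchar, card_filter_ne, hW1]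
    -- the deep-B certificate : N < 4t
    have hcert : N < 4*t := by
      have h2 := hrogE u1 hu1 hne1
      have h3 := hnoc (B.connectedComponentMk u1)
      omega
    refine ⟨R.connectedComponentMk w0, ?_, hP2, ?_⟩
    · have hsub : bpart R W1 (R.connectedComponentMk w0)
          ⊆ poolP R B W1 W2 N (R.connectedComponentMk w0) := by
        intro u hu
        rw [mem_bpart] at hu
        exact mem_poolP.2 ⟨hu.1, hu.2, hnoc _⟩
      have h1 := Finset.card_le_card hsub
      omega
    · -- Q1 alone suffices : the dstar block's W1-part
      have hsub : bpart B W1 dstar ⊆ poolQ R B W1 W2 t (R.connectedComponentMk w0) := by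
        intro u hu
        rw [mem_bpart] at hu
        have hKu : R.connectedComponentMk u = R.connectedComponentMk w0 := by
          by_contra hK
          exact (hrogX u hu.1 hK) hu.2
        refine mem_poolQ.2 ⟨hu.1, hKu, ?_⟩
        rw [hu.2]
        exact hbds
      have h1 := Finset.card_le_card hsub
      omega

end Kappa2
section Kappa4

variable {N t m : ℕ} {G R B : SimpleGraph V} {W1 W2 : Finset V}

/-- auxiliary contradiction: no "second block" on the side of `u`. -/
theorem kappa4sub (hW1 : W1.card = N) (hW2 : W2.card = N)
    (hdeg : ∀ v, 3*N < 4*G.degree v) (hRG : R ≤ G) (hBG : B ≤ G)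
    (hsplit : ∀ x y, G.Adj x y ↔ R.Adj x y ∨ B.Adj x y)
    (hRB : ∀ x y, R.Adj x y → B.Adj x y → False)
    (hside : ∀ u w, u ∈ W1 → G.Adj u w → w ∈ W2)
    (hside' : ∀ u w, u ∈ W2 → G.Adj u w → w ∈ W1)
    (hnoc : ∀ c : B.ConnectedComponent, 4 * (bpart B W2 c).card ≤ 2*N)
    (hnod : ∀ c : B.ConnectedComponent, 4 * (bpart B W1 c).card ≤ 2*N)
    {u u' u'' : V} (hu : u ∈ W1) (hu' : u' ∈ W1) (hu'' : u'' ∈ W1)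
    (hne : R.connectedComponentMk u ≠ R.connectedComponentMk u')
    (hzz : R.connectedComponentMk u'' = R.connectedComponentMk u)
    (hzx : B.connectedComponentMk u'' ≠ B.connectedComponentMk u) : False := by
  -- placements
  obtain ⟨wx, hwxR, hwxB⟩ := PLACE hdeg hW2 hRG hBG hsplit hRB hside hu hu' hne (hnoc _)
  obtain ⟨wy, hwyR, hwyB⟩ := PLACE hdeg hW2 hRG hBG hsplit hRB hside hu' hu
    (Ne.symm hne) (hnoc _)
  have hwxW2 : wx ∈ W2 := bpart_subset hwxR
  have hwyW2 : wy ∈ W2 := bpart_subset hwyR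
  have hKwx : R.connectedComponentMk wx = R.connectedComponentMk u' := (mem_bpart.1 hwxR).2
  have hLwx : B.connectedComponentMk wx = B.connectedComponentMk u := (mem_bpart.1 hwxB).2
  have hKwy : R.connectedComponentMk wy = R.connectedComponentMk u := (mem_bpart.1 hwyR).2
  have hLwy : B.connectedComponentMk wy = B.connectedComponentMk u' := (mem_bpart.1 hwyB).2
  -- B-part atomicity: blocks x and y
  have hBx : ∀ w ∈ W2, B.connectedComponentMk w = B.connectedComponentMk u →
      R.connectedComponentMk w = R.connectedComponentMk u' := by
    intro w hw hL
    exact (ATsame hdeg hW1 hsplit hside' hw hwxW2 (hL.trans hLwx.symm) (hnod _)).trans hKwx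
  have hBy : ∀ w ∈ W2, B.connectedComponentMk w = B.connectedComponentMk u' →
      R.connectedComponentMk w = R.connectedComponentMk u := by
    intro w hw hL
    exact (ATsame hdeg hW1 hsplit hside' hw hwyW2 (hL.trans hLwy.symm) (hnod _)).trans hKwy
  -- placement for the block z of u''
  have hnez : R.connectedComponentMk u'' ≠ R.connectedComponentMk u' := by
    rw [hzz]; exact hne
  obtain ⟨wz, hwzR, hwzB⟩ := PLACE hdeg hW2 hRG hBG hsplit hRB hside hu'' hu' hnez (hnoc _)
  have hwzW2 : wz ∈ W2 := bpart_subset hwzR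
  have hKwz : R.connectedComponentMk wz = R.connectedComponentMk u' := (mem_bpart.1 hwzR).2
  have hLwz : B.connectedComponentMk wz = B.connectedComponentMk u'' := (mem_bpart.1 hwzB).2
  have hBz : ∀ w ∈ W2, B.connectedComponentMk w = B.connectedComponentMk u'' →
      R.connectedComponentMk w = R.connectedComponentMk u' := by
    intro w hw hL
    exact (ATsame hdeg hW1 hsplit hside' hw hwzW2 (hL.trans hLwz.symm) (hnod _)).trans hKwz
  -- (k-c) : the W2-parts of blocks x and z sit inside the red comp of u'
  have hsubxz : bpart B W2 (B.connectedComponentMk u) ∪ bpart B W2 (B.connectedComponentMk u'')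
      ⊆ bpart R W2 (R.connectedComponentMk u') := by
    intro w hw
    rw [Finset.mem_union, mem_bpart, mem_bpart] at hw
    rcases hw with ⟨hwW, hL⟩ | ⟨hwW, hL⟩
    · exact mem_bpart.2 ⟨hwW, hBx w hwW hL⟩
    · exact mem_bpart.2 ⟨hwW, hBz w hwW hL⟩
  have hkc : (bpart B W2 (B.connectedComponentMk u)).card
      + (bpart B W2 (B.connectedComponentMk u'')).card
      ≤ (bpart R W2 (R.connectedComponentMk u')).card := by
    rw [← Finset.card_union_of_disjoint (bpart_disjoint (Ne.symm hzx))]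
    exact Finset.card_le_card hsubxz
  -- (k-d)
  have hX1u := X1 hdeg hW2 hsplit hside hu hne
  have hintx : ((bpart R W2 (R.connectedComponentMk u'))
      ∩ (bpart B W2 (B.connectedComponentMk u))).card
      ≤ (bpart B W2 (B.connectedComponentMk u)).card :=
    Finset.card_le_card Finset.inter_subset_right
  have hkd1 : 4 * (bpart B W2 (B.connectedComponentMk u'')).card < N := by omega
  have hX1u'' := X1 hdeg hW2 hsplit hside hu'' hnez
  have hintz : ((bpart R W2 (R.connectedComponentMk u'))
      ∩ (bpart B W2 (B.connectedComponentMk u''))).card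
      ≤ (bpart B W2 (B.connectedComponentMk u'')).card :=
    Finset.card_le_card Finset.inter_subset_right
  have hkd2 : 4 * (bpart B W2 (B.connectedComponentMk u)).card < N := by
    omega
  -- (k-e)
  have hke := E1 hdeg hRG hBG hsplit hRB hside hu
  -- dichotomy on the composition of the red comp of u on the W2 side
  by_cases hally : ∀ w6 ∈ bpart R W2 (R.connectedComponentMk u),
      B.connectedComponentMk w6 = B.connectedComponentMk u'
  · -- then that whole part is inside block y, too small
    have hsub : bpart R W2 (R.connectedComponentMk u)
        ⊆ bpart B W2 (B.connectedComponentMk u') := by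
      intro w hw
      exact mem_bpart.2 ⟨bpart_subset hw, hally w hw⟩
    have h1 := Finset.card_le_card hsub
    have h2 := hnoc (B.connectedComponentMk u')
    omega
  · push_neg at hally
    obtain ⟨w6, hw6R, hw6y⟩ := hally
    have hw6W2 : w6 ∈ W2 := bpart_subset hw6R
    have hKw6 : R.connectedComponentMk w6 = R.connectedComponentMk u := (mem_bpart.1 hw6R).2
    -- the block of w6 has a nonempty W1-part
    have hE2w6 := E1 hdeg hRG hBG hsplit hRB hside' hw6W2
    have hane : (bpart B W1 (B.connectedComponentMk w6)).card ≠ 0 := by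
      intro h0
      have hE2wx := E1 hdeg hRG hBG hsplit hRB hside' hwxW2
      rw [hKwx, hLwx] at hE2wx
      have hnodx := hnod (B.connectedComponentMk u)
      have hpair := bpart_pair_card (H := R) (S := W1)
        (show R.connectedComponentMk u ≠ R.connectedComponentMk u' from hne)
      rw [hKw6, h0] at hE2w6
      omega
    obtain ⟨u6, hu6⟩ := Finset.card_pos.1 (Nat.pos_of_ne_zero hane)
    rw [mem_bpart] at hu6
    -- the W2 part of w6's block lies in the red comp of u
    have hBw6 : ∀ w ∈ W2, B.connectedComponentMk w = B.connectedComponentMk w6 →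
        R.connectedComponentMk w = R.connectedComponentMk u := by
      intro w hw hL
      exact (ATsame hdeg hW1 hsplit hside' hw hw6W2 hL (hnod _)).trans hKw6
    -- u6 must be in the red comp of u'
    have hKu6 : R.connectedComponentMk u6 = R.connectedComponentMk u' := by
      by_contra hK
      obtain ⟨wb, hwbR, hwbB⟩ := PLACE hdeg hW2 hRG hBG hsplit hRB hside hu6.1 hu' hK (hnoc _)
      have h1 : R.connectedComponentMk wb = R.connectedComponentMk u' := (mem_bpart.1 hwbR).2
      have h2 : B.connectedComponentMk wb = B.connectedComponentMk w6 :=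
        (mem_bpart.1 hwbB).2.trans hu6.2
      have h3 := hBw6 wb (bpart_subset hwbR) h2
      rw [h1] at h3
      exact hne h3.symm
    -- now the X1 pair kill
    have hX1u6 := X1 hdeg hW2 hsplit hside hu6.1
      (show R.connectedComponentMk u6 ≠ R.connectedComponentMk u by
        rw [hKu6]; exact Ne.symm hne)
    have hinty : ((bpart R W2 (R.connectedComponentMk u))
        ∩ (bpart B W2 (B.connectedComponentMk u6))).card
        ≤ (bpart B W2 (B.connectedComponentMk u6)).card :=
      Finset.card_le_card Finset.inter_subset_right
    -- the W2-parts of blocks y and (block of u6) sit inside the red comp of u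
    have hsubyz : bpart B W2 (B.connectedComponentMk u')
        ∪ bpart B W2 (B.connectedComponentMk u6)
        ⊆ bpart R W2 (R.connectedComponentMk u) := by
      intro w hw
      rw [Finset.mem_union, mem_bpart, mem_bpart] at hw
      rcases hw with ⟨hwW, hL⟩ | ⟨hwW, hL⟩
      · exact mem_bpart.2 ⟨hwW, hBy w hwW hL⟩
      · exact mem_bpart.2 ⟨hwW, hBw6 w hwW (hL.trans hu6.2)⟩
    have hyz : B.connectedComponentMk u' ≠ B.connectedComponentMk u6 := by
      intro h
      rw [hu6.2] at h
      exact hw6y h.symm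
    have hkc' : (bpart B W2 (B.connectedComponentMk u')).card
        + (bpart B W2 (B.connectedComponentMk u6)).card
        ≤ (bpart R W2 (R.connectedComponentMk u)).card := by
      rw [← Finset.card_union_of_disjoint (bpart_disjoint hyz)]
      exact Finset.card_le_card hsubyz
    have hX1u' := X1 hdeg hW2 hsplit hside hu' (Ne.symm hne)
    have hinty' : ((bpart R W2 (R.connectedComponentMk u))
        ∩ (bpart B W2 (B.connectedComponentMk u'))).card
        ≤ (bpart B W2 (B.connectedComponentMk u')).card :=
      Finset.card_le_card Finset.inter_subset_right
    -- 4*bCy < N and 4*bC(u6-block) < N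
    have hkd3 : 4 * (bpart B W2 (B.connectedComponentMk u')).card < N := by omega
    -- pair sum contradiction
    have hps := PSUM hdeg hW2 hRG hBG hsplit hRB hside hu hu' hne
    omega

theorem kappa4one (hW1 : W1.card = N) (hW2 : W2.card = N)
    (hdeg : ∀ v, 3*N < 4*G.degree v) (hRG : R ≤ G) (hBG : B ≤ G)
    (hsplit : ∀ x y, G.Adj x y ↔ R.Adj x y ∨ B.Adj x y)
    (hRB : ∀ x y, R.Adj x y → B.Adj x y → False)
    (hside : ∀ u w, u ∈ W1 → G.Adj u w → w ∈ W2)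
    (hside' : ∀ u w, u ∈ W2 → G.Adj u w → w ∈ W1)
    (hstar : ∀ c : B.ConnectedComponent,
      (bpart B W1 c).card ≤ t ∨ (bpart B W2 c).card ≤ t)
    (hNt : 2*t + 2 ≤ N)
    (hnoc : ∀ c : B.ConnectedComponent, 4 * (bpart B W2 c).card ≤ 2*N)
    (hnod : ∀ c : B.ConnectedComponent, 4 * (bpart B W1 c).card ≤ 2*N)
    {u u' : V} (hu : u ∈ W1) (hu' : u' ∈ W1) :
    R.connectedComponentMk u = R.connectedComponentMk u' := by
  by_contra hne
  have hxy : B.connectedComponentMk u ≠ B.connectedComponentMk u' := by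
    intro h
    exact hne (ATsame hdeg hW2 hsplit hside hu hu' h (hnoc _))
  -- placements (used in the endgame)
  obtain ⟨wx, hwxR, hwxB⟩ := PLACE hdeg hW2 hRG hBG hsplit hRB hside hu hu' hne (hnoc _)
  obtain ⟨wy, hwyR, hwyB⟩ := PLACE hdeg hW2 hRG hBG hsplit hRB hside hu' hu
    (Ne.symm hne) (hnoc _)
  have hwxW2 : wx ∈ W2 := bpart_subset hwxR
  have hwyW2 : wy ∈ W2 := bpart_subset hwyR
  have hKwx : R.connectedComponentMk wx = R.connectedComponentMk u' := (mem_bpart.1 hwxR).2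
  have hLwx : B.connectedComponentMk wx = B.connectedComponentMk u := (mem_bpart.1 hwxB).2
  have hKwy : R.connectedComponentMk wy = R.connectedComponentMk u := (mem_bpart.1 hwyR).2
  have hLwy : B.connectedComponentMk wy = B.connectedComponentMk u' := (mem_bpart.1 hwyB).2
  by_cases h3 : ∃ z ∈ W1, B.connectedComponentMk z ≠ B.connectedComponentMk u
      ∧ B.connectedComponentMk z ≠ B.connectedComponentMk u'
  · -- a third block exists : reduce to kappa4sub
    obtain ⟨u'', hu'', hzx, hzy⟩ := h3
    -- u'' is in the red comp of u or of u'
    have hK'' : R.connectedComponentMk u'' = R.connectedComponentMk u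
        ∨ R.connectedComponentMk u'' = R.connectedComponentMk u' := by
      by_contra hKK
      push_neg at hKK
      obtain ⟨wb, hwbR, hwbB⟩ := PLACE hdeg hW2 hRG hBG hsplit hRB hside hu'' hu'
        hKK.2 (hnoc _)
      -- wb is in block z=L u'' and in red comp of u' ; but also need info about block z...
      -- use instead: place u'' against u
      obtain ⟨wc, hwcR, hwcB⟩ := PLACE hdeg hW2 hRG hBG hsplit hRB hside hu'' hu
        hKK.1 (hnoc _)
      -- both wb and wc are in the W2-part of block z, but in different red comps:
      have h1 : R.connectedComponentMk wb = R.connectedComponentMk u' := (mem_bpart.1 hwbR).2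
      have h2 : R.connectedComponentMk wc = R.connectedComponentMk u := (mem_bpart.1 hwcR).2
      have h3' : B.connectedComponentMk wb = B.connectedComponentMk wc :=
        ((mem_bpart.1 hwbB).2).trans ((mem_bpart.1 hwcB).2).symm
      have := ATsame hdeg hW1 hsplit hside' (bpart_subset hwbR) (bpart_subset hwcR)
        h3' (hnod _)
      rw [h1, h2] at this
      exact hne this.symm
    rcases hK'' with h | h
    · exact kappa4sub hW1 hW2 hdeg hRG hBG hsplit hRB hside hside' hnoc hnod
        hu hu' hu'' hne h hzx
    · exact kappa4sub hW1 hW2 hdeg hRG hBG hsplit hRB hside hside' hnoc hnod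
        hu' hu hu'' (Ne.symm hne) h hzy
  · -- endgame : only two blocks
    push_neg at h3
    have hcov1 : ∀ v ∈ W1, B.connectedComponentMk v = B.connectedComponentMk u
        ∨ B.connectedComponentMk v = B.connectedComponentMk u' := by
      intro v hv
      by_contra hvv
      push_neg at hvv
      exact hvv.2 (h3 v hv hvv.1)
    have hA : W1 = bpart B W1 (B.connectedComponentMk u)
        ∪ bpart B W1 (B.connectedComponentMk u') := by
      ext v
      rw [Finset.mem_union, mem_bpart, mem_bpart]
      constructor
      · intro hv
        rcases hcov1 v hv with h | h
        · exact Or.inl ⟨hv, h⟩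
        · exact Or.inr ⟨hv, h⟩
      · rintro (⟨hv, _⟩ | ⟨hv, _⟩)
        · exact hv
        · exact hv
    have hsumA : (bpart B W1 (B.connectedComponentMk u)).card
        + (bpart B W1 (B.connectedComponentMk u')).card = N := by
      have hcu := Finset.card_union_of_disjoint (bpart_disjoint (H := B) (S := W1) hxy)
      rw [← hA, hW1] at hcu
      omega
    have haxv : 4 * (bpart B W1 (B.connectedComponentMk u)).card = 2*N
        ∧ 4 * (bpart B W1 (B.connectedComponentMk u')).card = 2*N := by
      have h1 := hnod (B.connectedComponentMk u)
      have h2 := hnod (B.connectedComponentMk u')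
      omega
    -- every W2-vertex is in block x or y
    have hcov2 : ∀ w ∈ W2, B.connectedComponentMk w = B.connectedComponentMk u
        ∨ B.connectedComponentMk w = B.connectedComponentMk u' := by
      intro w hw
      by_contra hww
      push_neg at hww
      have hzero : (bpart B W1 (B.connectedComponentMk w)).card = 0 := by
        rw [Finset.card_eq_zero]
        by_contra hno
        obtain ⟨v, hv⟩ := Finset.nonempty_iff_ne_empty.2 hno
        rw [mem_bpart] at hv
        rcases hcov1 v hv.1 with h | h
        · exact hww.1 (hv.2 ▸ h)
        · exact hww.2 (hv.2 ▸ h)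
      have hE2w := E1 hdeg hRG hBG hsplit hRB hside' hw
      rw [hzero] at hE2w
      have hE2wx := E1 hdeg hRG hBG hsplit hRB hside' hwxW2
      rw [hKwx, hLwx] at hE2wx
      have hE2wy := E1 hdeg hRG hBG hsplit hRB hside' hwyW2
      rw [hKwy, hLwy] at hE2wy
      by_cases hc1 : R.connectedComponentMk w = R.connectedComponentMk u
      · rw [hc1] at hE2w
        have hpair := bpart_pair_card (H := R) (S := W1) hne
        omega
      · by_cases hc2 : R.connectedComponentMk w = R.connectedComponentMk u'
        · rw [hc2] at hE2w
          have hpair := bpart_pair_card (H := R) (S := W1) hne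
          omega
        · have htrip := bpart_triple_card (H := R) (S := W1) hne
            (Ne.symm hc1) (Ne.symm hc2)
          omega
    have hB : W2 ⊆ bpart B W2 (B.connectedComponentMk u)
        ∪ bpart B W2 (B.connectedComponentMk u') := by
      intro w hw
      rw [Finset.mem_union, mem_bpart, mem_bpart]
      rcases hcov2 w hw with h | h
      · exact Or.inl ⟨hw, h⟩
      · exact Or.inr ⟨hw, h⟩
    have hsumB : N ≤ (bpart B W2 (B.connectedComponentMk u)).card
        + (bpart B W2 (B.connectedComponentMk u')).card := by
      have h1 := Finset.card_le_card hB
      have h2 := Finset.card_union_le (bpart B W2 (B.connectedComponentMk u))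
        (bpart B W2 (B.connectedComponentMk u'))
      omega
    have hbxv : 4 * (bpart B W2 (B.connectedComponentMk u)).card = 2*N := by
      have h1 := hnoc (B.connectedComponentMk u)
      have h2 := hnoc (B.connectedComponentMk u')
      omega
    rcases hstar (B.connectedComponentMk u) with h | h
    · omega
    · omega

end Kappa4
section KeyPools

variable {N t m : ℕ} {G R B : SimpleGraph V} {W1 W2 : Finset V}

theorem keyPools (hW1 : W1.card = N) (hW2 : W2.card = N)
    (hdeg : ∀ v, 3*N < 4*G.degree v) (hRG : R ≤ G) (hBG : B ≤ G)
    (hsplit : ∀ x y, G.Adj x y ↔ R.Adj x y ∨ B.Adj x y)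
    (hRB : ∀ x y, R.Adj x y → B.Adj x y → False)
    (hside : ∀ u w, u ∈ W1 → G.Adj u w → w ∈ W2)
    (hside' : ∀ u w, u ∈ W2 → G.Adj u w → w ∈ W1)
    (hstar : ∀ c : B.ConnectedComponent,
      (bpart B W1 c).card ≤ t ∨ (bpart B W2 c).card ≤ t)
    (hNt : 2*t + 2 ≤ N) (hmt : m + t = N) :
    ∃ d : R.ConnectedComponent, m ≤ (poolP R B W1 W2 N d).card
      ∧ m ≤ (poolP R B W2 W1 N d).card
      ∧ m ≤ (poolQ R B W1 W2 t d).card + (poolQ R B W2 W1 t d).card := by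
  have hstar' : ∀ c : B.ConnectedComponent,
      (bpart B W2 c).card ≤ t ∨ (bpart B W1 c).card ≤ t := fun c => (hstar c).symm
  by_cases hC : ∃ c : B.ConnectedComponent, 2*N < 4 * (bpart B W2 c).card
  · by_cases hD : ∃ c : B.ConnectedComponent, 2*N < 4 * (bpart B W1 c).card
    · obtain ⟨cstar, hc⟩ := hC
      obtain ⟨dstar, hd⟩ := hD
      exact kappa1 hW1 hW2 hdeg hRG hBG hsplit hRB hside hside' hstar hNt hmt hc hd
    · -- only a huge W2-side block : swapped kappa2
      push_neg at hD
      obtain ⟨cstar, hc⟩ := hC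
      have hnoc : ∀ c : B.ConnectedComponent, 4 * (bpart B W1 c).card ≤ 2*N := by
        intro c
        have := hD c
        omega
      obtain ⟨d, h1, h2, h3⟩ := kappa2 hW2 hW1 hdeg hRG hBG hsplit hRB hside' hside
        hstar' hNt hmt hc hnoc
      exact ⟨d, h2, h1, by omega⟩
  · push_neg at hC
    have hnoc : ∀ c : B.ConnectedComponent, 4 * (bpart B W2 c).card ≤ 2*N := by
      intro c
      have := hC c
      omega
    by_cases hD : ∃ c : B.ConnectedComponent, 2*N < 4 * (bpart B W1 c).card
    · obtain ⟨dstar, hd⟩ := hD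
      exact kappa2 hW1 hW2 hdeg hRG hBG hsplit hRB hside hside' hstar hNt hmt hd hnoc
    · -- neither : everything is in one red component
      push_neg at hD
      have hnod : ∀ c : B.ConnectedComponent, 4 * (bpart B W1 c).card ≤ 2*N := by
        intro c
        have := hD c
        omega
      have hone1 : ∀ u ∈ W1, ∀ u' ∈ W1,
          R.connectedComponentMk u = R.connectedComponentMk u' :=
        fun u hu u' hu' =>
          kappa4one hW1 hW2 hdeg hRG hBG hsplit hRB hside hside' hstar hNt hnoc hnod hu hu'
      have hone2 : ∀ w ∈ W2, ∀ w' ∈ W2,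
          R.connectedComponentMk w = R.connectedComponentMk w' :=
        fun w hw w' hw' =>
          kappa4one hW2 hW1 hdeg hRG hBG hsplit hRB hside' hside hstar' hNt hnod hnoc hw hw'
      have hW1ne : 0 < W1.card := by omega
      obtain ⟨u0, hu0⟩ := Finset.card_pos.1 hW1ne
      obtain ⟨w1, hw1W, hw1R, _⟩ := LINK hdeg hsplit hside hu0 (hnoc _)
      have hKw1 : R.connectedComponentMk w1 = R.connectedComponentMk u0 :=
        (SimpleGraph.ConnectedComponent.connectedComponentMk_eq_of_adj hw1R).symm
      refine ⟨R.connectedComponentMk u0, ?_, ?_, ?_⟩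
      · have hsub : W1 ⊆ poolP R B W1 W2 N (R.connectedComponentMk u0) :=
          fun u hu => mem_poolP.2 ⟨hu, hone1 u hu u0 hu0, hnoc _⟩
        have := Finset.card_le_card hsub
        omega
      · have hsub : W2 ⊆ poolP R B W2 W1 N (R.connectedComponentMk u0) :=
          fun w hw => mem_poolP.2 ⟨hw, (hone2 w hw w1 hw1W).trans hKw1, hnod _⟩
        have := Finset.card_le_card hsub
        omega
      · have hsub1 : W1.filter
            (fun u => (bpart B W2 (B.connectedComponentMk u)).card ≤ t)
            ⊆ poolQ R B W1 W2 t (R.connectedComponentMk u0) := by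
          intro u hu
          rw [Finset.mem_filter] at hu
          exact mem_poolQ.2 ⟨hu.1, hone1 u hu.1 u0 hu0, hu.2⟩
        have hsub2 : W2.filter
            (fun w => (bpart B W1 (B.connectedComponentMk w)).card ≤ t)
            ⊆ poolQ R B W2 W1 t (R.connectedComponentMk u0) := by
          intro w hw
          rw [Finset.mem_filter] at hw
          exact mem_poolQ.2 ⟨hw.1, (hone2 w hw.1 w1 hw1W).trans hKw1, hw.2⟩
        have h1 := Finset.card_le_card hsub1
        have h2 := Finset.card_le_card hsub2
        have h3 := LCOUNT hW1 hW2 hstar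
        omega

end KeyPools
section Extract

variable {N t m : ℕ} {G R B : SimpleGraph V} {W1 W2 : Finset V}

/-- from the pools, extract a connected matching of size `m` in `R`. -/
theorem extract (hW1 : W1.card = N) (hW2 : W2.card = N)
    (hdeg : ∀ v, 3*N < 4*G.degree v) (hRG : R ≤ G) (hBG : B ≤ G)
    (hsplit : ∀ x y, G.Adj x y ↔ R.Adj x y ∨ B.Adj x y)
    (hRB : ∀ x y, R.Adj x y → B.Adj x y → False)
    (hside : ∀ u w, u ∈ W1 → G.Adj u w → w ∈ W2)
    (hside' : ∀ u w, u ∈ W2 → G.Adj u w → w ∈ W1)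
    (hsep : ∀ v, v ∈ W1 → v ∈ W2 → False)
    (hNt : 2*t + 2 ≤ N) (hmt : m + t = N)
    {d : R.ConnectedComponent}
    (hP1 : m ≤ (poolP R B W1 W2 N d).card)
    (hP2 : m ≤ (poolP R B W2 W1 N d).card)
    (hQ : m ≤ (poolQ R B W1 W2 t d).card + (poolQ R B W2 W1 t d).card) :
    ∃ M : R.Subgraph, M.IsMatching ∧ M.edgeSet.ncard = m ∧
      ∃ c : R.ConnectedComponent, ∀ v ∈ M.verts, R.connectedComponentMk v = c := by
  classical
  set X := bpart R W1 d with hX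
  set p := X.card with hp
  have hP1X : poolP R B W1 W2 N d ⊆ X := Finset.filter_subset _ _
  have hmp : m ≤ p := le_trans hP1 (Finset.card_le_card hP1X)
  set k := p - m with hk
  -- degree lower bounds
  have hdegP1 : ∀ u ∈ poolP R B W1 W2 N d, N < 4 * R.degree u := by
    intro u hu
    rw [mem_poolP] at hu
    have := E1deg hdeg hBG hsplit hRB hside hu.1
    omega
  have hdegP2 : ∀ w ∈ poolP R B W2 W1 N d, N < 4 * R.degree w := by
    intro w hw
    rw [mem_poolP] at hw
    have := E1deg hdeg hBG hsplit hRB hside' hw.1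
    omega
  have hdegQ1 : ∀ u ∈ poolQ R B W1 W2 t d, 3*N < 4 * R.degree u + 4*t := by
    intro u hu
    rw [mem_poolQ] at hu
    have := E1deg hdeg hBG hsplit hRB hside hu.1
    omega
  have hdegQ2 : ∀ w ∈ poolQ R B W2 W1 t d, 3*N < 4 * R.degree w + 4*t := by
    intro w hw
    rw [mem_poolQ] at hw
    have := E1deg hdeg hBG hsplit hRB hside' hw.1
    omega
  -- red neighborhoods of W2-vertices of the component lie in X
  have hcapW2 : ∀ w ∈ bpart R W2 d, R.neighborFinset w ⊆ X := by
    intro w hw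
    rw [mem_bpart] at hw
    rw [hX, ← hw.2]
    exact red_capture hRG hside' hw.1
  -- Hall condition
  have hHall : ∀ s : Finset {x // x ∈ X},
      s.card ≤ (s.biUnion (fun x => ((R.neighborFinset x.1).image Sum.inl
        ∪ Finset.univ.image (Sum.inr : Fin k → V ⊕ Fin k)))).card := by
    intro s
    rcases s.eq_empty_or_nonempty with rfl | hsne
    · simp
    · have hbi : s.biUnion (fun x => ((R.neighborFinset x.1).image Sum.inl
          ∪ Finset.univ.image (Sum.inr : Fin k → V ⊕ Fin k)))
          = (s.biUnion (fun x => R.neighborFinset x.1)).image Sum.inl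
            ∪ Finset.univ.image (Sum.inr : Fin k → V ⊕ Fin k) := by
        ext e
        simp only [Finset.mem_biUnion, Finset.mem_union, Finset.mem_image]
        constructor
        · rintro ⟨x, hx, (⟨w, hw, rfl⟩ | ⟨b, hb, rfl⟩)⟩
          · exact Or.inl ⟨w, ⟨x, hx, hw⟩, rfl⟩
          · exact Or.inr ⟨b, hb, rfl⟩
        · rintro (⟨w, ⟨x, hx, hw⟩, rfl⟩ | ⟨b, hb, rfl⟩)
          · exact ⟨x, hx, Or.inl ⟨w, hw, rfl⟩⟩
          · obtain ⟨x, hx⟩ := hsne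
            exact ⟨x, hx, Or.inr ⟨b, hb, rfl⟩⟩
      rw [hbi]
      set NRs := s.biUnion (fun x => R.neighborFinset x.1) with hNRs
      have hdisj : Disjoint (NRs.image Sum.inl)
          (Finset.univ.image (Sum.inr : Fin k → V ⊕ Fin k)) := by
        rw [Finset.disjoint_left]
        rintro e he he'
        obtain ⟨w, _, rfl⟩ := Finset.mem_image.1 he
        obtain ⟨b, _, hb⟩ := Finset.mem_image.1 he'
        exact Sum.inl_ne_inr hb.symm
      rw [Finset.card_union_of_disjoint hdisj,
        Finset.card_image_of_injective _ Sum.inl_injective,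
        Finset.card_image_of_injective _ Sum.inr_injective, Finset.card_univ,
        Fintype.card_fin]
      -- now a counting argument
      set a := s.card with ha
      have hap : a ≤ p := by
        rw [ha, hp]
        have h := Finset.card_le_univ s
        have h2 : Fintype.card {x // x ∈ X} = X.card := Fintype.card_coe X
        omega

      -- vertices of the component's W2-side with a red neighbour in s are in NRs
      have hhit : ∀ w ∈ bpart R W2 d, p - a < R.degree w → w ∈ NRs := by
        intro w hw hdw
        have hsub := hcapW2 w hw
        set s' := s.image (fun x : {x // x ∈ X} => x.1) with hs'
        have hs'card : s'.card = a := by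
          rw [hs', ha]
          exact Finset.card_image_of_injective _ Subtype.val_injective
        have hs'sub : s' ⊆ X := by
          rw [hs']
          intro v hv
          obtain ⟨x, _, rfl⟩ := Finset.mem_image.1 hv
          exact x.2
        have hnbrx : ∃ v ∈ s', v ∈ R.neighborFinset w := by
          by_contra hcon
          push_neg at hcon
          have : R.neighborFinset w ⊆ X \ s' := by
            intro v hv
            rw [Finset.mem_sdiff]
            exact ⟨hsub hv, fun hv' => hcon v hv' hv⟩
          have h1 := Finset.card_le_card this
          rw [Finset.card_sdiff_of_subset hs'sub, hs'card,
            SimpleGraph.card_neighborFinset_eq_degree] at h1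
          omega
        obtain ⟨v, hvs, hvw⟩ := hnbrx
        obtain ⟨x, hxs, rfl⟩ := Finset.mem_image.1 hvs
        rw [hNRs, Finset.mem_biUnion]
        refine ⟨x, hxs, ?_⟩
        rw [SimpleGraph.mem_neighborFinset] at hvw ⊢
        exact hvw.symm
      have hpools2 : poolP R B W2 W1 N d ⊆ bpart R W2 d := Finset.filter_subset _ _
      have hpoolq2 : poolQ R B W2 W1 t d ⊆ bpart R W2 d := Finset.filter_subset _ _
      -- case analysis
      by_cases hc1 : a ≤ k
      · omega
      · by_cases hc2 : 4*(p - a) ≤ N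
        · -- all of pool2 is hit
          have hsub2 : poolP R B W2 W1 N d ⊆ NRs := by
            intro w hw
            refine hhit w (hpools2 hw) ?_
            have := hdegP2 w hw
            omega
          have := Finset.card_le_card hsub2
          omega
        · by_cases hq1 : ∃ x ∈ s, x.1 ∈ poolQ R B W1 W2 t d
          · obtain ⟨x, hxs, hxq⟩ := hq1
            have h1 : R.neighborFinset x.1 ⊆ NRs := by
              intro w hw
              rw [hNRs, Finset.mem_biUnion]
              exact ⟨x, hxs, hw⟩
            have h2 := Finset.card_le_card h1
            rw [SimpleGraph.card_neighborFinset_eq_degree] at h2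
            have h3 := hdegQ1 x.1 hxq
            omega
          · push_neg at hq1
            have hQ1out : poolQ R B W1 W2 t d ⊆ X.filter
                (fun v => ∀ x ∈ s, ¬ v = x.1) := by
              intro v hv
              rw [Finset.mem_filter]
              refine ⟨Finset.filter_subset _ _ hv, ?_⟩
              rintro x hxs rfl
              exact hq1 x hxs hv
            have hQ1card : (poolQ R B W1 W2 t d).card ≤ p - a := by
              have h1 := Finset.card_le_card hQ1out
              have h2 : X.filter (fun v => ∀ x ∈ s, ¬ v = x.1)
                  ⊆ X \ s.image (fun x : {x // x ∈ X} => x.1) := by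
                intro v hv
                rw [Finset.mem_filter] at hv
                rw [Finset.mem_sdiff]
                refine ⟨hv.1, ?_⟩
                intro hmem
                obtain ⟨x, hxs, rfl⟩ := Finset.mem_image.1 hmem
                exact hv.2 x hxs rfl
              have h3 := Finset.card_le_card h2
              have h4 : (s.image (fun x : {x // x ∈ X} => x.1)).card = a :=
                Finset.card_image_of_injective _ Subtype.val_injective
              have h5 : s.image (fun x : {x // x ∈ X} => x.1) ⊆ X := by
                intro v hv
                obtain ⟨x, _, rfl⟩ := Finset.mem_image.1 hv
                exact x.2
              rw [Finset.card_sdiff_of_subset h5, h4] at h3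
              omega
            by_cases hc5 : N + 4*(p - a) < 4*m
            · -- use poolQ on the W2 side
              have hsubq2 : poolQ R B W2 W1 t d ⊆ NRs := by
                intro w hw
                refine hhit w (hpoolq2 hw) ?_
                have := hdegQ2 w hw
                omega
              have := Finset.card_le_card hsubq2
              omega
            · by_cases hpp : ∃ x ∈ s, x.1 ∈ poolP R B W1 W2 N d
              · obtain ⟨x, hxs, hxq⟩ := hpp
                have h1 : R.neighborFinset x.1 ⊆ NRs := by
                  intro w hw
                  rw [hNRs, Finset.mem_biUnion]
                  exact ⟨x, hxs, hw⟩
                have h2 := Finset.card_le_card h1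
                rw [SimpleGraph.card_neighborFinset_eq_degree] at h2
                have h3 := hdegP1 x.1 hxq
                omega
              · push_neg at hpp
                have hP1out : poolP R B W1 W2 N d ⊆ X \ s.image
                    (fun x : {x // x ∈ X} => x.1) := by
                  intro v hv
                  rw [Finset.mem_sdiff]
                  refine ⟨hP1X hv, ?_⟩
                  intro hmem
                  obtain ⟨x, hxs, rfl⟩ := Finset.mem_image.1 hmem
                  exact hpp x hxs hv
                have h1 := Finset.card_le_card hP1out
                have h4 : (s.image (fun x : {x // x ∈ X} => x.1)).card = a :=
                  Finset.card_image_of_injective _ Subtype.val_injective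
                have h5 : s.image (fun x : {x // x ∈ X} => x.1) ⊆ X := by
                  intro v hv
                  obtain ⟨x, _, rfl⟩ := Finset.mem_image.1 hv
                  exact x.2
                rw [Finset.card_sdiff_of_subset h5, h4] at h1
                omega
  -- apply Hall's theorem
  obtain ⟨f, hfinj, hf⟩ := (Finset.all_card_le_biUnion_card_iff_exists_injective _).1 hHall
  set S0 := Finset.univ.filter (fun x : {x // x ∈ X} => (f x).isLeft = true) with hS0
  have hS1card : (Finset.univ.filter (fun x : {x // x ∈ X} => ¬ (f x).isLeft = true)).card ≤ k := by
    set S1 := Finset.univ.filter (fun x : {x // x ∈ X} => ¬ (f x).isLeft = true) with hS1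
    have himg : S1.image f ⊆ Finset.univ.image (Sum.inr : Fin k → V ⊕ Fin k) := by
      intro e he
      obtain ⟨x, hx, rfl⟩ := Finset.mem_image.1 he
      rw [hS1, Finset.mem_filter] at hx
      obtain ⟨b, hb⟩ := Sum.isRight_iff.1 (Sum.not_isLeft.1 hx.2)
      exact Finset.mem_image.2 ⟨b, Finset.mem_univ b, hb.symm⟩
    have h1 := Finset.card_le_card himg
    rwa [Finset.card_image_of_injective _ hfinj,
      Finset.card_image_of_injective _ Sum.inr_injective, Finset.card_univ,
      Fintype.card_fin] at h1
  have hS0card : m ≤ S0.card := by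
    have hcover : (Finset.univ : Finset {x // x ∈ X})
        ⊆ S0 ∪ (Finset.univ.filter (fun x : {x // x ∈ X} => ¬ (f x).isLeft = true)) := by
      intro x _
      rw [Finset.mem_union, hS0, Finset.mem_filter, Finset.mem_filter]
      by_cases h : (f x).isLeft = true
      · exact Or.inl ⟨Finset.mem_univ x, h⟩
      · exact Or.inr ⟨Finset.mem_univ x, h⟩
    have h1 := Finset.card_le_card hcover
    have h2 := Finset.card_union_le S0
      (Finset.univ.filter (fun x : {x // x ∈ X} => ¬ (f x).isLeft = true))
    have h3 : (Finset.univ : Finset {x // x ∈ X}).card = X.card := by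
      rw [Finset.card_univ, Fintype.card_coe]
    omega
  obtain ⟨S', hS'sub, hS'card⟩ := Finset.exists_subset_card_eq hS0card
  set gfun : {x // x ∈ X} → V := fun x => Sum.elim id (fun _ => x.1) (f x) with hgfun
  have hgleft : ∀ x ∈ S0, Sum.inl (gfun x) = f x := by
    intro x hx
    rw [hS0, Finset.mem_filter] at hx
    obtain ⟨w, hw⟩ := Sum.isLeft_iff.1 hx.2
    rw [hgfun]
    simp only [hw, Sum.elim_inl, id]
  have hgnbr : ∀ x ∈ S0, gfun x ∈ R.neighborFinset x.1 := by
    intro x hx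
    have h1 := hf x
    rw [Finset.mem_union] at h1
    rcases h1 with h | h
    · obtain ⟨w, hw, heq⟩ := Finset.mem_image.1 h
      have h2 : Sum.inl (gfun x) = Sum.inl w := (hgleft x hx).trans heq.symm
      rwa [← Sum.inl_injective h2] at hw
    · obtain ⟨b, _, heq⟩ := Finset.mem_image.1 h
      rw [hS0, Finset.mem_filter] at hx
      rw [← heq] at hx
      simp at hx
  have hginj : ∀ x ∈ S0, ∀ y ∈ S0, gfun x = gfun y → x = y := by
    intro x hx y hy hxy
    apply hfinj
    rw [← hgleft x hx, ← hgleft y hy, hxy]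
  have hxW1 : ∀ x : {x // x ∈ X}, x.1 ∈ W1 := fun x => bpart_subset x.2
  have hxK : ∀ x : {x // x ∈ X}, R.connectedComponentMk x.1 = d := fun x => (mem_bpart.1 x.2).2
  have hgR : ∀ x ∈ S0, R.Adj x.1 (gfun x) :=
    fun x hx => (SimpleGraph.mem_neighborFinset _ _ _).1 (hgnbr x hx)
  have hgW2 : ∀ x ∈ S0, gfun x ∈ W2 := fun x hx => hside _ _ (hxW1 x) (hRG (hgR x hx))
  refine ⟨{ verts := {v | ∃ x ∈ S', v = x.1 ∨ v = gfun x},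
            Adj := fun v w => ∃ x ∈ S', (v = x.1 ∧ w = gfun x) ∨ (v = gfun x ∧ w = x.1),
            adj_sub := ?_, edge_vert := ?_, symm := ?_ }, ?_, ?_, ?_⟩
  · rintro v w ⟨x, hxS, (⟨rfl, rfl⟩ | ⟨rfl, rfl⟩)⟩
    · exact hgR x (hS'sub hxS)
    · exact (hgR x (hS'sub hxS)).symm
  · rintro v w ⟨x, hxS, (⟨rfl, _⟩ | ⟨rfl, _⟩)⟩
    · exact ⟨x, hxS, Or.inl rfl⟩
    · exact ⟨x, hxS, Or.inr rfl⟩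
  · constructor
    rintro v w ⟨x, hxS, (⟨h1, h2⟩ | ⟨h1, h2⟩)⟩
    · exact ⟨x, hxS, Or.inr ⟨h2, h1⟩⟩
    · exact ⟨x, hxS, Or.inl ⟨h2, h1⟩⟩
  · -- IsMatching
    rintro v ⟨x, hxS, (rfl | rfl)⟩
    · refine ⟨gfun x, ⟨x, hxS, Or.inl ⟨rfl, rfl⟩⟩, ?_⟩
      rintro w ⟨y, hyS, (⟨h1, rfl⟩ | ⟨h1, rfl⟩)⟩
      · have hxy : x = y := Subtype.val_injective h1
        rw [hxy]
      · exact absurd (h1 ▸ hgW2 y (hS'sub hyS)) (fun hh => hsep _ (hxW1 x) hh)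
    · refine ⟨x.1, ⟨x, hxS, Or.inr ⟨rfl, rfl⟩⟩, ?_⟩
      rintro w ⟨y, hyS, (⟨h1, rfl⟩ | ⟨h1, rfl⟩)⟩
      · exact absurd (h1 ▸ hgW2 x (hS'sub hxS)) (fun hh => hsep _ (hxW1 y) hh)
      · have hxy : x = y := hginj x (hS'sub hxS) y (hS'sub hyS) h1
        rw [hxy]
  · -- edge count
    have hset : SimpleGraph.Subgraph.edgeSet
        { verts := {v | ∃ x ∈ S', v = x.1 ∨ v = gfun x},
          Adj := fun v w => ∃ x ∈ S', (v = x.1 ∧ w = gfun x) ∨ (v = gfun x ∧ w = x.1),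
          adj_sub := by
            rintro v w ⟨x, hxS, (⟨rfl, rfl⟩ | ⟨rfl, rfl⟩)⟩
            · exact hgR x (hS'sub hxS)
            · exact (hgR x (hS'sub hxS)).symm,
          edge_vert := by
            rintro v w ⟨x, hxS, (⟨rfl, _⟩ | ⟨rfl, _⟩)⟩
            · exact ⟨x, hxS, Or.inl rfl⟩
            · exact ⟨x, hxS, Or.inr rfl⟩,
          symm := by
            constructor
            rintro v w ⟨x, hxS, (⟨h1, h2⟩ | ⟨h1, h2⟩)⟩
            · exact ⟨x, hxS, Or.inr ⟨h2, h1⟩⟩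
            · exact ⟨x, hxS, Or.inl ⟨h2, h1⟩⟩ }
        = ↑(S'.image (fun x => s(x.1, gfun x))) := by
      ext e
      refine Sym2.inductionOn e ?_
      intro v w
      rw [SimpleGraph.Subgraph.mem_edgeSet]
      constructor
      · rintro ⟨x, hxS, (⟨rfl, rfl⟩ | ⟨rfl, rfl⟩)⟩
        · exact Finset.mem_coe.2 (Finset.mem_image.2 ⟨x, hxS, rfl⟩)
        · exact Finset.mem_coe.2 (Finset.mem_image.2 ⟨x, hxS, Sym2.eq_swap⟩)
      · intro he
        obtain ⟨x, hxS, heq⟩ := Finset.mem_image.1 (Finset.mem_coe.1 he)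
        rcases Sym2.eq_iff.1 heq with ⟨h1, h2⟩ | ⟨h1, h2⟩
        · exact ⟨x, hxS, Or.inl ⟨h1.symm, h2.symm⟩⟩
        · exact ⟨x, hxS, Or.inr ⟨h2.symm, h1.symm⟩⟩
    rw [hset, Set.ncard_coe_finset]
    rw [Finset.card_image_of_injOn, hS'card]
    intro x hxS y hyS heq
    rcases Sym2.eq_iff.1 heq with ⟨h1, _⟩ | ⟨h1, _⟩
    · exact Subtype.val_injective h1
    · exact absurd (h1 ▸ hgW2 y (hS'sub hyS)) (fun hh => hsep _ (hxW1 x) hh)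
  · -- connectivity
    refine ⟨d, ?_⟩
    rintro v ⟨x, hxS, (rfl | rfl)⟩
    · exact hxK x
    · exact ((SimpleGraph.ConnectedComponent.connectedComponentMk_eq_of_adj
        (hgR x (hS'sub hxS))).symm).trans (hxK x)

end Extract

end Aux

/-- A connected `k`-matching in a graph `H`: a matching of `k` edges all of whose
vertices lie in a single connected component of `H`. -/
def ConnMatching {V : Type*} [Fintype V] (H : SimpleGraph V) (k : ℕ) : Prop :=
  ∃ M : H.Subgraph, M.IsMatching ∧ M.edgeSet.ncard = k ∧
    ∃ c : H.ConnectedComponent, ∀ v ∈ M.verts, H.connectedComponentMk v = c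

theorem stmt_2 {V : Type*} [Fintype V] [DecidableEq V] (m n : ℕ) (hn : 1 ≤ n) (hmn : n < m)
    (G : SimpleGraph V) (V1 V2 : Finset V)
    (hdisj : Disjoint V1 V2) (hcover : V1 ∪ V2 = Finset.univ)
    (hV1 : V1.card = m + n - 1) (hV2 : V2.card = m + n - 1)
    (hbip : ∀ x y, G.Adj x y → (x ∈ V1 ∧ y ∈ V2) ∨ (x ∈ V2 ∧ y ∈ V1))
    (hδ : ∀ v, 3 * (m + n - 1) < 4 * (G.neighborSet v).ncard)
    (R B : SimpleGraph V) (hcolor : R ⊔ B = G) (hcdisj : Disjoint R B)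
    (hnored : ¬ ConnMatching R m) :
    ∃ c : B.ConnectedComponent,
        n ≤ ((V1 : Set V) ∩ c.supp).ncard ∧ n ≤ ((V2 : Set V) ∩ c.supp).ncard := by
    classical
  by_contra hcon
  push_neg at hcon
  have hsupp : ∀ (c : B.ConnectedComponent) (S : Finset V),
      ((S : Set V) ∩ c.supp).ncard = (bpart B S c).card := by
    intro c S
    have hseteq : (S : Set V) ∩ c.supp = ↑(bpart B S c) := by
      ext x
      simp only [Set.mem_inter_iff, Finset.mem_coe, mem_bpart,
        SimpleGraph.ConnectedComponent.mem_supp_iff]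
    rw [hseteq, Set.ncard_coe_finset]
  have hstar : ∀ c : B.ConnectedComponent,
      (bpart B V1 c).card ≤ n-1 ∨ (bpart B V2 c).card ≤ n-1 := by
    intro c
    by_cases h1 : n ≤ (bpart B V1 c).card
    · right
      have h2 := hcon c (by rw [hsupp]; exact h1)
      rw [hsupp] at h2
      omega
    · left
      omega
  have hRG : R ≤ G := hcolor ▸ le_sup_left
  have hBG : B ≤ G := hcolor ▸ le_sup_right
  have hsplit : ∀ x y, G.Adj x y ↔ R.Adj x y ∨ B.Adj x y := by
    intro x y
    rw [← hcolor]
    exact SimpleGraph.sup_adj R B x y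
  have hRB : ∀ x y, R.Adj x y → B.Adj x y → False := by
    intro x y h1 h2
    have h3 : (R ⊓ B).Adj x y := ⟨h1, h2⟩
    rw [disjoint_iff.1 hcdisj] at h3
    exact h3
  have hsep : ∀ v, v ∈ V1 → v ∈ V2 → False :=
    fun v h1 h2 => Finset.disjoint_left.1 hdisj h1 h2
  have hside : ∀ u w, u ∈ V1 → G.Adj u w → w ∈ V2 := by
    intro u w hu hadj
    rcases hbip u w hadj with ⟨_, h⟩ | ⟨h2, _⟩
    · exact h
    · exact (hsep u hu h2).elim
  have hside' : ∀ u w, u ∈ V2 → G.Adj u w → w ∈ V1 := by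
    intro u w hu hadj
    rcases hbip u w hadj with ⟨h2, _⟩ | ⟨_, h⟩
    · exact (hsep u h2 hu).elim
    · exact h
  have hdeg4 : ∀ v, 3*(m + n - 1) < 4*G.degree v := by
    intro v
    have h1 := hδ v
    have h2 : (G.neighborSet v).ncard = G.degree v := by
      rw [← SimpleGraph.card_neighborFinset_eq_degree, SimpleGraph.neighborFinset_def,
        Set.ncard_eq_toFinset_card']
    omega
  have hNt : 2*(n-1) + 2 ≤ m + n - 1 := by omega
  have hmt : m + (n-1) = m + n - 1 := by omega
  obtain ⟨d, h1, h2, h3⟩ := keyPools hV1 hV2 hdeg4 hRG hBG hsplit hRB hside hside'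
    hstar hNt hmt
  obtain ⟨M, hM1, hM2, c, hc⟩ := extract hV1 hV2 hdeg4 hRG hBG hsplit hRB hside hside'
    hsep hNt hmt h1 h2 h3
  exact hnored ⟨M, hM1, hM2, c, hc⟩
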